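/- arXiv:1906.02021 — 2 statements merged into one kernel-verified Lean document; each statement's English description precedes it below -/
import Mathlib

section
/- Let G be a finite weighted planar graph with vertices a, b, c, d appearing in that cyclic order on a face F, and let S be a subset of the vertices of F disjoint from {a,b,c,d}. Assume S is a,c-separated, meaning there do not exist three mutually vertex-disjoint paths P1, P2, P3 in G such that P1 connects a to c, P2 connects b to a vertex of S, and P3 connects d to another vertex of S. Denote by M_f(H) the sum of weights of matchings of a subgraph H in which every vertex not in S is matched (vertices of S may be matched or unmatched). Then M_f(G)·M_f(G∖{a,b,c,d}) + M_f(G∖{b,d})·M_f(G∖{a,c}) + M_f(G∖{b})·M_f(G∖{a,c,d}) + M_f(G∖{d})·M_f(G∖{a,b,c}) = M_f(G∖{a,d})·M_f(G∖{b,c}) + M_f(G∖{a,b})·M_f(G∖{c,d}) + M_f(G∖{a})·M_f(G∖{b,c,d}) + M_f(G∖{a,b,d})·M_f(G∖{c}). -/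
open scoped Classical

variable {V : Type*} [Fintype V] [DecidableEq V] {R : Type*} [CommRing R]

/-- `M` is a matching of the induced subgraph of `G` on the vertex set `A`:
a set of edges of `G` contained in `A` that are pairwise vertex-disjoint. -/
def IsMatchingOn (G : SimpleGraph V) (A : Finset V) (M : Finset (Sym2 V)) : Prop :=
  (∀ e ∈ M, e ∈ G.edgeSet) ∧ (∀ e ∈ M, ∀ v ∈ e, v ∈ A) ∧
  (∀ e ∈ M, ∀ f ∈ M, e ≠ f → ∀ v : V, v ∈ e → v ∉ f)

/-- `Mf G w S A` is the total weight (weight of a matching = product of its edge weights)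
of all matchings of the induced subgraph of `G` on `A` in which every vertex of `A` not
belonging to the distinguished ("free") set `S` is matched. -/
noncomputable def Mf (G : SimpleGraph V) (w : Sym2 V → R) (S A : Finset V) : R :=
  ∑ M ∈ Finset.univ.filter
      (fun M : Finset (Sym2 V) =>
        IsMatchingOn G A M ∧ ∀ v ∈ A, v ∉ S → ∃ e ∈ M, v ∈ e),
    ∏ e ∈ M, w e

/-- Two walks are (vertex-)disjoint. -/
def WalkDisjoint {G : SimpleGraph V} {u v u' v' : V} (P : G.Walk u v) (Q : G.Walk u' v') : Prop :=
  ∀ z : V, z ∈ P.support → z ∉ Q.support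

/-- `S` is `a,c`-separated (relative to `b` and `d`): there is no triple of mutually
vertex-disjoint paths `P₁ : a — c`, `P₂ : b — s`, `P₃ : d — t` with `s ≠ t` in `S`. -/
def Separated (G : SimpleGraph V) (S : Finset V) (a b c d : V) : Prop :=
  ¬ ∃ (s t : V) (P₁ : G.Walk a c) (P₂ : G.Walk b s) (P₃ : G.Walk d t),
      s ∈ S ∧ t ∈ S ∧ s ≠ t ∧ P₁.IsPath ∧ P₂.IsPath ∧ P₃.IsPath ∧
      WalkDisjoint P₁ P₂ ∧ WalkDisjoint P₁ P₃ ∧ WalkDisjoint P₂ P₃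

/-- `L` is the boundary cycle of a face of a planar embedding of `G`, on which the four
vertices `a`, `b`, `c`, `d` occur in this cyclic order.  Planarity of the embedding is
encoded through its characteristic combinatorial consequence: two pairs of vertices that
interleave on the boundary cycle of a face can never be joined by two vertex-disjoint
paths of `G`. -/
structure FaceConfig (G : SimpleGraph V) (L : List V) (a b c d : V) : Prop where
  nodup : L.Nodup
  cyclic : ∃ L' : List V, L ~r L' ∧ ∃ i j k l : Fin L'.length,
      i < j ∧ j < k ∧ k < l ∧ L'.get i = a ∧ L'.get j = b ∧ L'.get k = c ∧ L'.get l = d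
  noncrossing : ∀ L' : List V, L ~r L' → ∀ i j k l : Fin L'.length, i < j → j < k → k < l →
      ¬ ∃ (P : G.Walk (L'.get i) (L'.get k)) (Q : G.Walk (L'.get j) (L'.get l)),
          P.IsPath ∧ Q.IsPath ∧ WalkDisjoint P Q


open Finset SimpleGraph
open scoped symmDiff

set_option linter.unusedSectionVars false

/-- Edges of `F` incident to `v`. -/
def kuoInc (F : Finset (Sym2 V)) (v : V) : Finset (Sym2 V) := F.filter (fun e => v ∈ e)

lemma mem_kuoInc {F : Finset (Sym2 V)} {v : V} {e : Sym2 V} :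
    e ∈ kuoInc F v ↔ e ∈ F ∧ v ∈ e := by simp [kuoInc]

lemma kuo_mem_support_of_mem_edges {H : SimpleGraph V} {p q v : V} (W : H.Walk p q)
    {e : Sym2 V} (he : e ∈ W.edges) (hv : v ∈ e) : v ∈ W.support := by
  obtain ⟨u, rfl⟩ := Sym2.mem_iff_exists.mp hv
  exact W.fst_mem_support_of_mem_edges he

lemma kuo_reachable_of_mem_support {H : SimpleGraph V} {p q v : V} (W : H.Walk p q)
    (hv : v ∈ W.support) : H.Reachable p v := (W.takeUntil v hv).reachable

/-- An internal vertex of a path is incident to two distinct edges of the path. -/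
lemma kuo_two_edges {H : SimpleGraph V} {a x : V} (W : H.Walk a x) (hW : W.IsPath)
    {v : V} (hv : v ∈ W.support) (hva : v ≠ a) (hvx : v ≠ x) :
    ∃ e₁ ∈ W.edges, ∃ e₂ ∈ W.edges, e₁ ≠ e₂ ∧ v ∈ e₁ ∧ v ∈ e₂ := by
  induction W with
  | nil =>
    simp only [Walk.support_nil, List.mem_singleton] at hv
    exact absurd hv hva
  | @cons u b y h W ih =>
    rw [Walk.support_cons] at hv
    rcases List.mem_cons.mp hv with rfl | hv'
    · exact absurd rfl hva
    · by_cases hvb : v = b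
      · subst hvb
        cases W with
        | nil => exact absurd rfl hvx
        | @cons _ c _ h2 W2 =>
          have huc : u ≠ c := by
            intro h'
            have h3 : u ∉ (Walk.cons h2 W2).support := ((Walk.cons_isPath_iff h _).mp hW).2
            rw [Walk.support_cons] at h3
            exact h3 (List.mem_cons_of_mem _ (by rw [h']; exact W2.start_mem_support))
          refine ⟨s(u, v), ?_, s(v, c), ?_, ?_, ?_, ?_⟩
          · rw [Walk.edges_cons]; exact List.mem_cons_self
          · rw [Walk.edges_cons, Walk.edges_cons]
            exact List.mem_cons_of_mem _ (List.mem_cons_self)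
          · intro hEq
            rcases Sym2.eq_iff.mp hEq with ⟨h3, _⟩ | ⟨h3, _⟩
            · exact h.ne h3
            · exact huc h3
          · exact Sym2.mem_mk_right u v
          · exact Sym2.mem_mk_left v c
      · obtain ⟨e₁, he₁, e₂, he₂, hne, h1, h2⟩ := ih hW.of_cons hv' hvb hvx
        exact ⟨e₁, by rw [Walk.edges_cons]; exact List.mem_cons_of_mem _ he₁,
          e₂, by rw [Walk.edges_cons]; exact List.mem_cons_of_mem _ he₂, hne, h1, h2⟩

/-- In a path, there is at most one edge through the starting vertex. -/
lemma kuo_start_edge_unique {H : SimpleGraph V} {a x : V} (W : H.Walk a x) (hW : W.IsPath)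
    {e₁ e₂ : Sym2 V} (h1 : e₁ ∈ W.edges) (h2 : e₂ ∈ W.edges) (ha1 : a ∈ e₁) (ha2 : a ∈ e₂) :
    e₁ = e₂ := by
  cases W with
  | nil => simp [Walk.edges_nil] at h1
  | @cons _ b _ h W =>
    have hnW : ∀ e ∈ W.edges, a ∉ e := by
      intro e he hue
      exact ((Walk.cons_isPath_iff h W).mp hW).2 (kuo_mem_support_of_mem_edges W he hue)
    rw [Walk.edges_cons] at h1 h2
    rcases List.mem_cons.mp h1 with rfl | h1'
    · rcases List.mem_cons.mp h2 with rfl | h2'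
      · rfl
      · exact absurd ha2 (hnW _ h2')
    · exact absurd ha1 (hnW _ h1')

lemma kuo_end_edge_unique {H : SimpleGraph V} {a x : V} (W : H.Walk a x) (hW : W.IsPath)
    {e₁ e₂ : Sym2 V} (h1 : e₁ ∈ W.edges) (h2 : e₂ ∈ W.edges) (ha1 : x ∈ e₁) (ha2 : x ∈ e₂) :
    e₁ = e₂ := by
  apply kuo_start_edge_unique W.reverse hW.reverse
    (by rw [Walk.edges_reverse]; exact List.mem_reverse.mpr h1)
    (by rw [Walk.edges_reverse]; exact List.mem_reverse.mpr h2) ha1 ha2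

lemma kuo_exists_start_edge {H : SimpleGraph V} {a x : V} (W : H.Walk a x) (hax : a ≠ x) :
    ∃ e ∈ W.edges, a ∈ e := by
  cases W with
  | nil => exact absurd rfl hax
  | @cons _ b _ h W =>
    exact ⟨s(a, b), by rw [Walk.edges_cons]; exact List.mem_cons_self, Sym2.mem_mk_left a b⟩

/-- **Core lemma**: in an edge set `D` of maximum degree 2, the component of a vertex `a`
of degree 1 is a path ending at another vertex `x` of degree 1, and `a, x` are the only
degree-1 vertices of this component. -/
lemma kuo_core (D : Finset (Sym2 V)) (hD : ∀ e ∈ D, ¬ e.IsDiag)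
    (hdeg : ∀ v, (kuoInc D v).card ≤ 2) (a : V) (ha : (kuoInc D a).card = 1) :
    ∃ x : V, x ≠ a ∧ (fromEdgeSet (↑D : Set (Sym2 V))).Reachable a x ∧ (kuoInc D x).card = 1 ∧
      (∃ W : (fromEdgeSet (↑D : Set (Sym2 V))).Walk a x, W.IsPath) ∧
      ∀ v, (fromEdgeSet (↑D : Set (Sym2 V))).Reachable a v → (kuoInc D v).card = 1 →
        v = a ∨ v = x := by
  set H := fromEdgeSet (↑D : Set (Sym2 V)) with hH
  have hedge : ∀ {p q : V} (W : H.Walk p q), ∀ e ∈ W.edges, e ∈ D := by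
    intro p q W e he
    have := W.edges_subset_edgeSet he
    rw [hH, edgeSet_fromEdgeSet] at this
    exact this.1
  have hDadj : ∀ {e : Sym2 V}, e ∈ D → ∀ v ∈ e, ∃ u, e = s(v, u) ∧ u ≠ v ∧ H.Adj v u := by
    intro e heD v hv
    obtain ⟨u, rfl⟩ := Sym2.mem_iff_exists.mp hv
    have hne : u ≠ v := by
      intro h; exact hD _ heD (by simp [h, Sym2.isDiag_iff_proj_eq])
    exact ⟨u, rfl, hne, (fromEdgeSet_adj _).mpr ⟨heD, hne.symm⟩⟩
  -- a maximal path starting at a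
  let P : ℕ → Prop := fun n => ∃ (x : V) (W : H.Walk a x), W.IsPath ∧ W.length = n
  have hP0 : P 0 := ⟨a, Walk.nil, Walk.IsPath.nil, rfl⟩
  obtain ⟨x, W, hWp, hWlen⟩ :
      P (Nat.findGreatest P (Fintype.card V)) := Nat.findGreatest_spec (Nat.zero_le _) hP0
  have hmax : ∀ (y : V) (W' : H.Walk a y), W'.IsPath → W'.length ≤ W.length := by
    intro y W' h
    rw [hWlen]
    exact Nat.le_findGreatest h.length_lt.le ⟨y, W', h, rfl⟩
  -- no extension at x
  have hext : ∀ z, H.Adj x z → z ∈ W.support := by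
    intro z hz
    by_contra hzs
    have hzs' : z ∉ W.reverse.support := by rwa [Walk.support_reverse, List.mem_reverse]
    have hp : (Walk.cons hz.symm W.reverse).reverse.IsPath :=
      ((hWp.reverse).cons hzs').reverse
    have := hmax z _ hp
    rw [Walk.length_reverse, Walk.length_cons, Walk.length_reverse] at this
    omega
  -- a has an incident edge
  obtain ⟨e₀, he₀⟩ := Finset.card_eq_one.mp ha
  have he₀D : e₀ ∈ D ∧ a ∈ e₀ := mem_kuoInc.mp (he₀ ▸ Finset.mem_singleton_self e₀)
  obtain ⟨u₀, he₀eq, hu₀ne, hu₀adj⟩ := hDadj he₀D.1 a he₀D.2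
  have hxa : x ≠ a := by
    rintro rfl
    have : W = Walk.nil := Walk.isPath_iff_eq_nil.mp hWp
    have hu := hext u₀ hu₀adj
    rw [this, Walk.support_nil, List.mem_singleton] at hu
    exact hu₀ne hu
  -- closure: the support of W is closed under adjacency
  have hclose : ∀ u z, u ∈ W.support → H.Adj u z → z ∈ W.support := by
    intro u z hu huz
    by_contra hzs
    have heD : s(u, z) ∈ D := by
      have := huz
      rw [hH, fromEdgeSet_adj] at this
      exact this.1
    have heW : s(u, z) ∉ W.edges := fun hmem => hzs (W.snd_mem_support_of_mem_edges hmem)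
    by_cases hux : u = x
    · subst hux; exact hzs (hext z huz)
    · by_cases hua : u = a
      · subst hua
        obtain ⟨e₁, he₁W, he₁a⟩ := kuo_exists_start_edge W (Ne.symm hxa)
        have h2 : 1 < (kuoInc D u).card := by
          rw [Finset.one_lt_card]
          exact ⟨e₁, mem_kuoInc.mpr ⟨hedge W _ he₁W, he₁a⟩,
            s(u, z), mem_kuoInc.mpr ⟨heD, Sym2.mem_mk_left u z⟩,
            fun h => heW (h ▸ he₁W)⟩
        omega
      · obtain ⟨e₁, he₁, e₂, he₂, hne, h1, h2⟩ := kuo_two_edges W hWp hu hua hux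
        have h3 : 2 < (kuoInc D u).card := by
          rw [Finset.two_lt_card]
          exact ⟨e₁, mem_kuoInc.mpr ⟨hedge W _ he₁, h1⟩,
            e₂, mem_kuoInc.mpr ⟨hedge W _ he₂, h2⟩,
            s(u, z), mem_kuoInc.mpr ⟨heD, Sym2.mem_mk_left u z⟩,
            hne, fun h => heW (h ▸ he₁), fun h => heW (h ▸ he₂)⟩
        exact absurd (hdeg u) (by omega)
  -- support of W = the whole component of a
  have hsupp : ∀ v, H.Reachable a v → v ∈ W.support := by
    intro v hv
    obtain ⟨Q⟩ := hv
    have key : ∀ {p q : V} (Q : H.Walk p q), p ∈ W.support → q ∈ W.support := by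
      intro p q Q
      induction Q with
      | nil => exact id
      | cons h _ ih => exact fun hp => ih (hclose _ _ hp h)
    exact key Q W.start_mem_support
  have hxcard : (kuoInc D x).card = 1 := by
    obtain ⟨elast, helastW, helastx⟩ : ∃ e ∈ W.edges, x ∈ e := by
      obtain ⟨e, he, hxe⟩ := kuo_exists_start_edge W.reverse hxa
      exact ⟨e, by rwa [Walk.edges_reverse, List.mem_reverse] at he, hxe⟩
    have hsub : ∀ f ∈ kuoInc D x, f = elast := by
      intro f hf
      obtain ⟨hfD, hxf⟩ := mem_kuoInc.mp hf
      obtain ⟨y, rfl, hyne, hAdj⟩ := hDadj hfD x hxf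
      by_cases hfW : s(x, y) ∈ W.edges
      · exact kuo_end_edge_unique W hWp hfW helastW (Sym2.mem_mk_left x y) helastx
      · exfalso
        have hyW : y ∈ W.support := hext y hAdj
        by_cases hya : y = a
        · subst hya
          obtain ⟨e₁, he₁W, he₁a⟩ := kuo_exists_start_edge W (Ne.symm hxa)
          have h2 : 1 < (kuoInc D y).card := by
            rw [Finset.one_lt_card]
            exact ⟨e₁, mem_kuoInc.mpr ⟨hedge W _ he₁W, he₁a⟩,
              s(x, y), mem_kuoInc.mpr ⟨hfD, Sym2.mem_mk_right x y⟩,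
              fun h => hfW (h ▸ he₁W)⟩
          omega
        · obtain ⟨e₁, he₁, e₂, he₂, hne, h1, h2⟩ := kuo_two_edges W hWp hyW hya hyne
          have h3 : 2 < (kuoInc D y).card := by
            rw [Finset.two_lt_card]
            exact ⟨e₁, mem_kuoInc.mpr ⟨hedge W _ he₁, h1⟩,
              e₂, mem_kuoInc.mpr ⟨hedge W _ he₂, h2⟩,
              s(x, y), mem_kuoInc.mpr ⟨hfD, Sym2.mem_mk_right x y⟩,
              hne, fun h => hfW (h ▸ he₁), fun h => hfW (h ▸ he₂)⟩
          exact absurd (hdeg y) (by omega)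
    have hmem : elast ∈ kuoInc D x := mem_kuoInc.mpr ⟨hedge W _ helastW, helastx⟩
    have hset : kuoInc D x = {elast} := Finset.eq_singleton_iff_unique_mem.mpr ⟨hmem, hsub⟩
    rw [hset]; exact Finset.card_singleton _
  refine ⟨x, hxa, W.reachable, hxcard, ⟨W, hWp⟩, ?_⟩
  intro v hrv hc1
  by_contra hcon
  push_neg at hcon
  obtain ⟨hva, hvx⟩ := hcon
  obtain ⟨e₁, he₁, e₂, he₂, hne, h1, h2⟩ := kuo_two_edges W hWp (hsupp v hrv) hva hvx
  have h3 : 1 < (kuoInc D v).card := Finset.one_lt_card.mpr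
    ⟨e₁, mem_kuoInc.mpr ⟨hedge W _ he₁, h1⟩, e₂, mem_kuoInc.mpr ⟨hedge W _ he₂, h2⟩, hne⟩
  omega


lemma kuoInc_symmDiff (M N : Finset (Sym2 V)) (v : V) :
    kuoInc (M ∆ N) v = kuoInc M v ∆ kuoInc N v := by
  ext e
  simp only [mem_kuoInc, Finset.mem_symmDiff]
  tauto

lemma kuo_card_symmDiff_le (s t : Finset (Sym2 V)) : (s ∆ t).card ≤ s.card + t.card := by
  refine le_trans (Finset.card_le_card ?_) (Finset.card_union_le s t)
  intro e he
  rw [Finset.mem_symmDiff] at he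
  rw [Finset.mem_union]
  tauto

lemma kuo_empty_or_singleton {α : Type*} [DecidableEq α] {s : Finset α} (hs : s.card ≤ 1) :
    s = ∅ ∨ ∃ u, s = {u} := by
  interval_cases h : s.card
  · exact Or.inl (Finset.card_eq_zero.mp h)
  · exact Or.inr (Finset.card_eq_one.mp h)

lemma kuo_card_sd_one {α : Type*} [DecidableEq α] {s t : Finset α}
    (hs : s.card ≤ 1) (ht : t.card ≤ 1) :
    (s ∆ t).card = 1 ↔ ((s = ∅ ∧ t ≠ ∅) ∨ (s ≠ ∅ ∧ t = ∅)) := by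
  rcases kuo_empty_or_singleton hs with rfl | ⟨u, rfl⟩ <;>
    rcases kuo_empty_or_singleton ht with rfl | ⟨v, rfl⟩
  · simp
  · rw [← Finset.bot_eq_empty, bot_symmDiff]
    simp
  · rw [← Finset.bot_eq_empty, symmDiff_bot]
    simp
  · by_cases huv : u = v
    · subst huv
      rw [symmDiff_self, Finset.bot_eq_empty]
      simp
    · have : ({u} : Finset α) ∆ {v} = {u, v} := by
        ext z
        simp only [Finset.mem_symmDiff, Finset.mem_singleton, Finset.mem_insert]
        constructor
        · tauto
        · rintro (rfl | rfl)
          · exact Or.inl ⟨rfl, huv⟩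
          · exact Or.inr ⟨rfl, fun h => huv h.symm⟩
      rw [this, Finset.card_insert_of_notMem (by simpa using huv), Finset.card_singleton]
      constructor
      · intro h; exact absurd h (by omega)
      · rintro (⟨h, -⟩ | ⟨-, h⟩) <;> simp at h

/-- The edges of `D` belonging to the connected component of `a`. -/
noncomputable def kuoComp (D : Finset (Sym2 V)) (a : V) : Finset (Sym2 V) :=
  D.filter (fun e => ∃ v ∈ e, (SimpleGraph.fromEdgeSet (↑D : Set (Sym2 V))).Reachable a v)

lemma kuoComp_subset (D : Finset (Sym2 V)) (a : V) : kuoComp D a ⊆ D :=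
  Finset.filter_subset _ _

lemma kuoInc_comp (D : Finset (Sym2 V)) (hD : ∀ e ∈ D, ¬ e.IsDiag) (a v : V) :
    kuoInc (kuoComp D a) v =
      if (fromEdgeSet (↑D : Set (Sym2 V))).Reachable a v then kuoInc D v else ∅ := by
  split_ifs with h
  · ext e
    simp only [mem_kuoInc, kuoComp, Finset.mem_filter]
    constructor
    · rintro ⟨⟨heD, -⟩, hv⟩; exact ⟨heD, hv⟩
    · rintro ⟨heD, hv⟩; exact ⟨⟨heD, ⟨v, hv, h⟩⟩, hv⟩
  · ext e
    simp only [mem_kuoInc, kuoComp, Finset.mem_filter, Finset.notMem_empty, iff_false, not_and]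
    rintro ⟨heD, u, hu, hru⟩ hv
    apply h
    obtain ⟨y, rfl⟩ := Sym2.mem_iff_exists.mp hu
    have hne : u ≠ y := fun hh => hD _ heD (by simp [hh, Sym2.isDiag_iff_proj_eq])
    rcases Sym2.mem_iff.mp hv with rfl | rfl
    · exact hru
    · exact hru.trans (((fromEdgeSet_adj _).mpr ⟨heD, hne⟩).reachable)

def kuoGood (G : SimpleGraph V) (F : Finset (Sym2 V)) : Prop :=
  (∀ e ∈ F, e ∈ G.edgeSet) ∧ ∀ v, (kuoInc F v).card ≤ 1

def kuoUncov (S : Finset V) (F : Finset (Sym2 V)) : Finset V :=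
  Finset.univ.filter (fun v => v ∉ S ∧ kuoInc F v = ∅)

lemma mem_kuoUncov {S : Finset V} {F : Finset (Sym2 V)} {v : V} :
    v ∈ kuoUncov S F ↔ v ∉ S ∧ kuoInc F v = ∅ := by simp [kuoUncov]

/-- Planarity + separation: in the superposition, `a` and `c` are not connected. -/
lemma kuo_noac (G : SimpleGraph V) (S : Finset V) (a b c d : V)
    (hsep : Separated G S a b c d)
    (hnc : ¬ ∃ (P : G.Walk a c) (Q : G.Walk b d), P.IsPath ∧ Q.IsPath ∧ WalkDisjoint P Q)
    (hab : a ≠ b) (hac : a ≠ c) (had : a ≠ d) (hbc : b ≠ c) (hbd : b ≠ d) (hcd : c ≠ d)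
    (haS : a ∉ S) (hbS : b ∉ S) (hcS : c ∉ S) (hdS : d ∉ S)
    (D : Finset (Sym2 V)) (hDG : ∀ e ∈ D, e ∈ G.edgeSet)
    (hdeg : ∀ v, (kuoInc D v).card ≤ 2)
    (h1 : ∀ v, v = a ∨ v = b ∨ v = c ∨ v = d → (kuoInc D v).card = 1)
    (h2 : ∀ v, (kuoInc D v).card = 1 → v ∈ S ∨ v = a ∨ v = b ∨ v = c ∨ v = d) :
    ¬ (fromEdgeSet (↑D : Set (Sym2 V))).Reachable a c := by
  intro hRc
  have hD : ∀ e ∈ D, ¬ e.IsDiag := fun e he => G.not_isDiag_of_mem_edgeSet (hDG e he)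
  set H := fromEdgeSet (↑D : Set (Sym2 V)) with hH
  have hHG : ∀ {p q : V} (W : H.Walk p q), ∀ e ∈ W.edges, e ∈ G.edgeSet := by
    intro p q W e he
    have := W.edges_subset_edgeSet he
    rw [hH, edgeSet_fromEdgeSet] at this
    exact hDG _ this.1
  -- component of a is a path from a to c
  obtain ⟨xa, hxa_ne, hRxa, hxadeg, ⟨Wa, hWa⟩, hclassa⟩ :=
    kuo_core D hD hdeg a (h1 a (Or.inl rfl))
  have hxac : xa = c := by
    rcases hclassa c hRc (h1 c (by tauto)) with h | h
    · exact absurd h.symm hac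
    · exact h.symm
  subst hxac
  -- b is in a different component
  have hRab : ¬ H.Reachable a b := by
    intro h
    rcases hclassa b h (h1 b (by tauto)) with h' | h'
    · exact hab h'.symm
    · exact hbc h'
  obtain ⟨xb, hxb_ne, hRxb, hxbdeg, ⟨Wb, hWb⟩, hclassb⟩ :=
    kuo_core D hD hdeg b (h1 b (by tauto))
  have hxb_cases : xb = d ∨ xb ∈ S := by
    rcases h2 xb hxbdeg with h | h | h | h | h
    · exact Or.inr h
    · exact absurd (h ▸ hRxb).symm hRab
    · exact absurd h hxb_ne
    · exact absurd (hRc.trans (h ▸ hRxb).symm) hRab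
    · exact Or.inl h
  -- disjointness helper
  have hdisjW : ∀ {p q p' q' : V} (W1 : H.Walk p q) (W2 : H.Walk p' q'),
      ¬ H.Reachable p p' → ∀ z, z ∈ W1.support → z ∉ W2.support := by
    intro p q p' q' W1 W2 hnr z hz hz'
    exact hnr ((kuo_reachable_of_mem_support W1 hz).trans
      (kuo_reachable_of_mem_support W2 hz').symm)
  rcases hxb_cases with rfl | hxbS
  · -- crossing paths a–c and b–d: contradiction with planarity
    refine hnc ⟨Wa.transfer G (hHG Wa), Wb.transfer G (hHG Wb),
      hWa.transfer _, hWb.transfer _, ?_⟩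
    intro z hz hz'
    rw [Walk.support_transfer] at hz hz'
    exact hdisjW Wa Wb hRab z hz hz'
  · -- b goes to S; consider d
    have hRad : ¬ H.Reachable a d := by
      intro h
      rcases hclassa d h (h1 d (by tauto)) with h' | h'
      · exact had h'.symm
      · exact hcd h'.symm
    have hRbd : ¬ H.Reachable b d := by
      intro h
      rcases hclassb d h (h1 d (by tauto)) with h' | h'
      · exact hbd h'.symm
      · exact hdS (h' ▸ hxbS)
    obtain ⟨xd, hxd_ne, hRxd, hxddeg, ⟨Wd, hWd⟩, hclassd⟩ :=
      kuo_core D hD hdeg d (h1 d (by tauto))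
    have hxdS : xd ∈ S := by
      rcases h2 xd hxddeg with h | h | h | h | h
      · exact h
      · exact absurd (h ▸ hRxd).symm hRad
      · exact absurd (h ▸ hRxd).symm hRbd
      · exact absurd (hRc.trans (h ▸ hRxd).symm) hRad
      · exact absurd h hxd_ne
    have hst : xb ≠ xd := by
      rintro rfl
      exact hRbd (hRxb.trans hRxd.symm)
    refine hsep ⟨xb, xd, Wa.transfer G (hHG Wa), Wb.transfer G (hHG Wb),
      Wd.transfer G (hHG Wd), hxbS, hxdS, hst, hWa.transfer _, hWb.transfer _,
      hWd.transfer _, ?_, ?_, ?_⟩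
    · intro z hz hz'
      rw [Walk.support_transfer] at hz hz'
      exact hdisjW Wa Wb hRab z hz hz'
    · intro z hz hz'
      rw [Walk.support_transfer] at hz hz'
      exact hdisjW Wa Wd hRad z hz hz'
    · intro z hz hz'
      rw [Walk.support_transfer] at hz hz'
      exact hdisjW Wb Wd hRbd z hz hz'


section Swap

variable {R : Type*} [CommRing R]

/-- The main swap lemma: replacing both matchings along the component of `a`
in the superposition. -/
lemma kuo_swap (G : SimpleGraph V) (w : Sym2 V → R) (S : Finset V) (a b c d : V)
    (hsep : Separated G S a b c d)
    (hnc : ¬ ∃ (P : G.Walk a c) (Q : G.Walk b d), P.IsPath ∧ Q.IsPath ∧ WalkDisjoint P Q)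
    (hab : a ≠ b) (hac : a ≠ c) (had : a ≠ d) (hbc : b ≠ c) (hbd : b ≠ d) (hcd : c ≠ d)
    (haS : a ∉ S) (hbS : b ∉ S) (hcS : c ∉ S) (hdS : d ∉ S)
    (M N : Finset (Sym2 V)) (hM : kuoGood G M) (hN : kuoGood G N)
    (hu : kuoUncov S M ∪ kuoUncov S N = {a, b, c, d})
    (hdj : Disjoint (kuoUncov S M) (kuoUncov S N))
    (hcN : c ∈ kuoUncov S N) :
    kuoGood G (M ∆ kuoComp (M ∆ N) a) ∧ kuoGood G (N ∆ kuoComp (M ∆ N) a) ∧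
    kuoUncov S (M ∆ kuoComp (M ∆ N) a) ∪ kuoUncov S (N ∆ kuoComp (M ∆ N) a) = {a, b, c, d} ∧
    Disjoint (kuoUncov S (M ∆ kuoComp (M ∆ N) a)) (kuoUncov S (N ∆ kuoComp (M ∆ N) a)) ∧
    c ∈ kuoUncov S (N ∆ kuoComp (M ∆ N) a) ∧
    (a ∈ kuoUncov S (M ∆ kuoComp (M ∆ N) a) ↔ a ∉ kuoUncov S M) ∧
    (M ∆ kuoComp (M ∆ N) a) ∆ (N ∆ kuoComp (M ∆ N) a) = M ∆ N ∧
    (∏ e ∈ M ∆ kuoComp (M ∆ N) a, w e) * (∏ e ∈ N ∆ kuoComp (M ∆ N) a, w e) =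
      (∏ e ∈ M, w e) * (∏ e ∈ N, w e) := by
  set D := M ∆ N with hDdef
  set P := kuoComp D a with hPdef
  have hDmem : ∀ e, e ∈ D ↔ (e ∈ M ∧ e ∉ N) ∨ (e ∈ N ∧ e ∉ M) := by
    intro e; rw [hDdef, Finset.mem_symmDiff]
  have hDG : ∀ e ∈ D, e ∈ G.edgeSet := by
    intro e he
    rcases (hDmem e).mp he with ⟨h, -⟩ | ⟨h, -⟩
    · exact hM.1 e h
    · exact hN.1 e h
  have hDdiag : ∀ e ∈ D, ¬ e.IsDiag := fun e he => G.not_isDiag_of_mem_edgeSet (hDG e he)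
  set H := fromEdgeSet (↑D : Set (Sym2 V)) with hH
  have hincD : ∀ v, kuoInc D v = kuoInc M v ∆ kuoInc N v := fun v => kuoInc_symmDiff M N v
  have hdeg : ∀ v, (kuoInc D v).card ≤ 2 := by
    intro v
    rw [hincD]
    exact le_trans (kuo_card_symmDiff_le _ _) (Nat.add_le_add (hM.2 v) (hN.2 v))
  have habcd_one : ∀ v, v = a ∨ v = b ∨ v = c ∨ v = d → (kuoInc D v).card = 1 := by
    intro v hv
    have hvS : v ∉ S := by rcases hv with rfl | rfl | rfl | rfl <;> assumption
    have hvmem : v ∈ kuoUncov S M ∪ kuoUncov S N := by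
      rw [hu]
      simp only [Finset.mem_insert, Finset.mem_singleton]
      tauto
    rw [hincD]
    rcases Finset.mem_union.mp hvmem with h | h
    · have h1 : kuoInc M v = ∅ := (mem_kuoUncov.mp h).2
      have h2 : kuoInc N v ≠ ∅ := fun h2 =>
        (Finset.disjoint_left.mp hdj h) (mem_kuoUncov.mpr ⟨hvS, h2⟩)
      exact (kuo_card_sd_one (hM.2 v) (hN.2 v)).mpr (Or.inl ⟨h1, h2⟩)
    · have h1 : kuoInc N v = ∅ := (mem_kuoUncov.mp h).2
      have h2 : kuoInc M v ≠ ∅ := fun h2 =>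
        (Finset.disjoint_right.mp hdj h) (mem_kuoUncov.mpr ⟨hvS, h2⟩)
      exact (kuo_card_sd_one (hM.2 v) (hN.2 v)).mpr (Or.inr ⟨h2, h1⟩)
  have hone_S : ∀ v, (kuoInc D v).card = 1 → v ∈ S ∨ v = a ∨ v = b ∨ v = c ∨ v = d := by
    intro v hv
    by_contra hcon
    push_neg at hcon
    obtain ⟨hvS, hva, hvb, hvc, hvd⟩ := hcon
    have hnotin : v ∉ kuoUncov S M ∪ kuoUncov S N := by
      rw [hu]
      simp only [Finset.mem_insert, Finset.mem_singleton]
      tauto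
    rw [Finset.mem_union] at hnotin
    push_neg at hnotin
    have hvM : kuoInc M v ≠ ∅ := fun h => hnotin.1 (mem_kuoUncov.mpr ⟨hvS, h⟩)
    have hvN : kuoInc N v ≠ ∅ := fun h => hnotin.2 (mem_kuoUncov.mpr ⟨hvS, h⟩)
    rw [hincD] at hv
    rcases (kuo_card_sd_one (hM.2 v) (hN.2 v)).mp hv with ⟨h, -⟩ | ⟨-, h⟩
    · exact hvM h
    · exact hvN h
  have hRc : ¬ H.Reachable a c :=
    kuo_noac G S a b c d hsep hnc hab hac had hbc hbd hcd haS hbS hcS hdS D hDG hdeg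
      (fun v hv => habcd_one v hv) (fun v hv => hone_S v hv)
  obtain ⟨x, hxa, hRx, hxdeg, -, hclass⟩ := kuo_core D hDdiag hdeg a (habcd_one a (Or.inl rfl))
  have hxc : x ≠ c := fun h => hRc (h ▸ hRx)
  -- incidence of the swapped sets
  have hMP : ∀ v, kuoInc (M ∆ P) v = if H.Reachable a v then kuoInc N v else kuoInc M v := by
    intro v
    rw [kuoInc_symmDiff, hPdef, kuoInc_comp D hDdiag a v]
    split_ifs with h
    · rw [hincD]
      exact symmDiff_symmDiff_cancel_left _ _
    · rw [← Finset.bot_eq_empty, symmDiff_bot]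
  have hNP : ∀ v, kuoInc (N ∆ P) v = if H.Reachable a v then kuoInc M v else kuoInc N v := by
    intro v
    rw [kuoInc_symmDiff, hPdef, kuoInc_comp D hDdiag a v]
    split_ifs with h
    · rw [hincD, symmDiff_comm (kuoInc M v)]
      exact symmDiff_symmDiff_cancel_left _ _
    · rw [← Finset.bot_eq_empty, symmDiff_bot]
  have hUM : ∀ v, v ∈ kuoUncov S (M ∆ P) ↔
      ((H.Reachable a v ∧ v ∈ kuoUncov S N) ∨ (¬ H.Reachable a v ∧ v ∈ kuoUncov S M)) := by
    intro v
    rw [mem_kuoUncov, hMP]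
    by_cases h : H.Reachable a v <;> simp [h, mem_kuoUncov]
  have hUN : ∀ v, v ∈ kuoUncov S (N ∆ P) ↔
      ((H.Reachable a v ∧ v ∈ kuoUncov S M) ∨ (¬ H.Reachable a v ∧ v ∈ kuoUncov S N)) := by
    intro v
    rw [mem_kuoUncov, hNP]
    by_cases h : H.Reachable a v <;> simp [h, mem_kuoUncov]
  refine ⟨?_, ?_, ?_, ?_, ?_, ?_, ?_, ?_⟩
  · constructor
    · intro e he
      rcases Finset.mem_symmDiff.mp he with ⟨h, -⟩ | ⟨h, -⟩
      · exact hM.1 e h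
      · exact hDG e (kuoComp_subset D a h)
    · intro v
      rw [hMP]
      split_ifs
      · exact hN.2 v
      · exact hM.2 v
  · constructor
    · intro e he
      rcases Finset.mem_symmDiff.mp he with ⟨h, -⟩ | ⟨h, -⟩
      · exact hN.1 e h
      · exact hDG e (kuoComp_subset D a h)
    · intro v
      rw [hNP]
      split_ifs
      · exact hM.2 v
      · exact hN.2 v
  · rw [← hu]
    ext v
    rw [Finset.mem_union, Finset.mem_union, hUM, hUN]
    by_cases h : H.Reachable a v <;> tauto
  · rw [Finset.disjoint_left]
    intro v hv hv'
    rw [hUM] at hv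
    rw [hUN] at hv'
    rcases hv with ⟨h, hv⟩ | ⟨h, hv⟩ <;> rcases hv' with ⟨h', hv'⟩ | ⟨h', hv'⟩ <;>
      first
        | exact (Finset.disjoint_left.mp hdj hv' hv)
        | exact (Finset.disjoint_left.mp hdj hv hv')
        | exact absurd h h'
        | exact absurd h' h
  · rw [hUN]
    exact Or.inr ⟨hRc, hcN⟩
  · rw [hUM]
    have hRa : H.Reachable a a := Reachable.refl a
    have haabcd : a ∈ kuoUncov S M ∪ kuoUncov S N := by
      rw [hu]; simp
    constructor
    · rintro (⟨-, h⟩ | ⟨h, -⟩)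
      · exact fun h' => Finset.disjoint_left.mp hdj h' h
      · exact absurd hRa h
    · intro h
      rcases Finset.mem_union.mp haabcd with h' | h'
      · exact absurd h' h
      · exact Or.inl ⟨hRa, h'⟩
  · rw [symmDiff_symmDiff_symmDiff_comm, symmDiff_self, symmDiff_bot, hDdef]
  · have hsplit : ∀ (A : Finset (Sym2 V)),
        ∏ e ∈ A, w e = (∏ e ∈ A ∩ P, w e) * ∏ e ∈ A \ P, w e :=
      fun A => (Finset.prod_inter_mul_prod_diff A P w).symm
    have hPD : P ⊆ D := kuoComp_subset D a
    have hPe : ∀ e ∈ P, (e ∈ M ∧ e ∉ N) ∨ (e ∈ N ∧ e ∉ M) := fun e he => (hDmem e).mp (hPD he)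
    have e1 : (M ∆ P) ∩ P = P ∩ N := by
      ext e
      simp only [Finset.mem_inter, Finset.mem_symmDiff]
      constructor
      · rintro ⟨⟨hM', hP'⟩ | ⟨hP', hM'⟩, hP''⟩
        · exact absurd hP'' hP'
        · rcases hPe e hP' with ⟨h, -⟩ | ⟨h, -⟩
          · exact absurd h hM'
          · exact ⟨hP', h⟩
      · rintro ⟨hP', hN'⟩
        rcases hPe e hP' with ⟨-, h⟩ | ⟨-, h⟩
        · exact absurd hN' h
        · exact ⟨Or.inr ⟨hP', h⟩, hP'⟩
    have e2 : (M ∆ P) \ P = M \ P := by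
      ext e
      simp only [Finset.mem_sdiff, Finset.mem_symmDiff]
      tauto
    have e3 : (N ∆ P) ∩ P = P ∩ M := by
      ext e
      simp only [Finset.mem_inter, Finset.mem_symmDiff]
      constructor
      · rintro ⟨⟨hN', hP'⟩ | ⟨hP', hN'⟩, hP''⟩
        · exact absurd hP'' hP'
        · rcases hPe e hP' with ⟨h, -⟩ | ⟨h, -⟩
          · exact ⟨hP', h⟩
          · exact absurd h hN'
      · rintro ⟨hP', hM'⟩
        rcases hPe e hP' with ⟨-, h⟩ | ⟨-, h⟩
        · exact ⟨Or.inr ⟨hP', h⟩, hP'⟩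
        · exact absurd hM' h
    have e4 : (N ∆ P) \ P = N \ P := by
      ext e
      simp only [Finset.mem_sdiff, Finset.mem_symmDiff]
      tauto
    have e5 : M ∩ P = P ∩ M := Finset.inter_comm M P
    have e6 : N ∩ P = P ∩ N := Finset.inter_comm N P
    rw [hsplit (M ∆ P), hsplit (N ∆ P), hsplit M, hsplit N, e1, e2, e3, e4, e5, e6]
    ring

end Swap


section Assembly

variable {R : Type*} [CommRing R]

lemma kuo_ne_of_mem {s t : Finset V} (v : V) (hv : v ∈ s) (hv' : v ∉ t) : s ≠ t :=
  fun h => hv' (h ▸ hv)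

lemma kuo_Mf_eq (G : SimpleGraph V) (w : Sym2 V → R) (S : Finset V) (T : Finset V)
    (hTS : ∀ v ∈ T, v ∉ S) :
    Mf G w S (Finset.univ \ T) =
      ∑ M ∈ Finset.univ.filter
        (fun M : Finset (Sym2 V) => kuoGood G M ∧ kuoUncov S M = T),
        ∏ e ∈ M, w e := by
  unfold Mf
  congr 1
  apply Finset.filter_congr
  intro M _
  constructor
  · rintro ⟨⟨hE, hA, hDisj⟩, hcov⟩
    refine ⟨⟨hE, ?_⟩, ?_⟩
    · intro v
      by_contra hlt
      push_neg at hlt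
      obtain ⟨e, he, f, hf, hne⟩ := Finset.one_lt_card.mp hlt
      rw [mem_kuoInc] at he hf
      exact hDisj e he.1 f hf.1 hne v he.2 hf.2
    · ext v
      rw [mem_kuoUncov]
      constructor
      · rintro ⟨hvS, hinc⟩
        by_contra hvT
        obtain ⟨e, he, hve⟩ := hcov v (Finset.mem_sdiff.mpr ⟨Finset.mem_univ v, hvT⟩) hvS
        exact Finset.notMem_empty e (hinc ▸ mem_kuoInc.mpr ⟨he, hve⟩)
      · intro hvT
        refine ⟨hTS v hvT, Finset.eq_empty_iff_forall_notMem.mpr ?_⟩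
        intro e he
        rw [mem_kuoInc] at he
        exact (Finset.mem_sdiff.mp (hA e he.1 v he.2)).2 hvT
  · rintro ⟨⟨hE, hcard⟩, hT⟩
    refine ⟨⟨hE, ?_, ?_⟩, ?_⟩
    · intro e he v hv
      refine Finset.mem_sdiff.mpr ⟨Finset.mem_univ v, fun hvT => ?_⟩
      rw [← hT, mem_kuoUncov] at hvT
      exact Finset.notMem_empty e (hvT.2 ▸ mem_kuoInc.mpr ⟨he, hv⟩)
    · intro e he f hf hne v hve hvf
      have : 1 < (kuoInc M v).card := Finset.one_lt_card.mpr
        ⟨e, mem_kuoInc.mpr ⟨he, hve⟩, f, mem_kuoInc.mpr ⟨hf, hvf⟩, hne⟩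
      exact absurd (hcard v) (by omega)
    · intro v hvA hvS
      have hvT : v ∉ T := (Finset.mem_sdiff.mp hvA).2
      rw [← hT, mem_kuoUncov] at hvT
      push_neg at hvT
      have hne : kuoInc M v ≠ ∅ := Finset.nonempty_iff_ne_empty.mp (hvT hvS)
      obtain ⟨e, he⟩ := Finset.nonempty_iff_ne_empty.mpr hne
      rw [mem_kuoInc] at he
      exact ⟨e, he.1, he.2⟩

lemma kuo_sum_ite4 {α : Type*} (s : Finset α) (f : α → R) (C1 C2 C3 C4 : α → Prop)
    [DecidablePred C1] [DecidablePred C2] [DecidablePred C3] [DecidablePred C4]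
    [DecidablePred (fun p => C1 p ∨ C2 p ∨ C3 p ∨ C4 p)]
    (hx : ∀ p, ¬(C1 p ∧ C2 p) ∧ ¬(C1 p ∧ C3 p) ∧ ¬(C1 p ∧ C4 p) ∧ ¬(C2 p ∧ C3 p) ∧
      ¬(C2 p ∧ C4 p) ∧ ¬(C3 p ∧ C4 p)) :
    ∑ p ∈ s.filter C1, f p + ∑ p ∈ s.filter C2, f p + ∑ p ∈ s.filter C3, f p
        + ∑ p ∈ s.filter C4, f p
      = ∑ p ∈ s.filter (fun p => C1 p ∨ C2 p ∨ C3 p ∨ C4 p), f p := by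
  rw [Finset.sum_filter, Finset.sum_filter, Finset.sum_filter, Finset.sum_filter,
    Finset.sum_filter, ← Finset.sum_add_distrib, ← Finset.sum_add_distrib,
    ← Finset.sum_add_distrib]
  apply Finset.sum_congr rfl
  intro p _
  obtain ⟨h12, h13, h14, h23, h24, h34⟩ := hx p
  by_cases h1 : C1 p <;> by_cases h2 : C2 p <;> by_cases h3 : C3 p <;> by_cases h4 : C4 p <;>
    simp_all

lemma kuo_Q1_iff (G : SimpleGraph V) (S : Finset V) (a b c d : V)
    (hab : a ≠ b) (hac : a ≠ c) (had : a ≠ d) (hbc : b ≠ c) (hbd : b ≠ d) (hcd : c ≠ d)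
    (p : Finset (Sym2 V) × Finset (Sym2 V)) :
    (kuoGood G p.1 ∧ kuoGood G p.2 ∧
        kuoUncov S p.1 ∪ kuoUncov S p.2 = {a, b, c, d} ∧
        Disjoint (kuoUncov S p.1) (kuoUncov S p.2) ∧
        a ∈ kuoUncov S p.2 ∧ c ∈ kuoUncov S p.2) ↔
      (((kuoGood G p.1 ∧ kuoUncov S p.1 = ∅) ∧ (kuoGood G p.2 ∧ kuoUncov S p.2 = {a, b, c, d})) ∨
       ((kuoGood G p.1 ∧ kuoUncov S p.1 = {b, d}) ∧ (kuoGood G p.2 ∧ kuoUncov S p.2 = {a, c})) ∨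
       ((kuoGood G p.1 ∧ kuoUncov S p.1 = {b}) ∧ (kuoGood G p.2 ∧ kuoUncov S p.2 = {a, c, d})) ∨
       ((kuoGood G p.1 ∧ kuoUncov S p.1 = {d}) ∧ (kuoGood G p.2 ∧ kuoUncov S p.2 = {a, b, c}))) := by
  constructor
  · rintro ⟨g1, g2, hun, hdj, haN, hcN⟩
    have h4 : ∀ v, (v ∈ kuoUncov S p.1 ∨ v ∈ kuoUncov S p.2) ↔
        (v = a ∨ v = b ∨ v = c ∨ v = d) := by
      intro v
      rw [← Finset.mem_union, hun]
      simp
    have hnand : ∀ v, v ∈ kuoUncov S p.1 → v ∉ kuoUncov S p.2 := fun v h =>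
      Finset.disjoint_left.mp hdj h
    have ha1 : a ∉ kuoUncov S p.1 := fun h => hnand a h haN
    have hc1 : c ∉ kuoUncov S p.1 := fun h => hnand c h hcN
    by_cases hb : b ∈ kuoUncov S p.1 <;> by_cases hd : d ∈ kuoUncov S p.1
    · refine Or.inr (Or.inl ⟨⟨g1, ?_⟩, g2, ?_⟩) <;> ext v <;>
        simp only [Finset.mem_insert, Finset.mem_singleton]
      · constructor
        · intro hv
          rcases (h4 v).mp (Or.inl hv) with h | h | h | h
          · exact absurd (h ▸ hv) ha1
          · exact Or.inl h
          · exact absurd (h ▸ hv) hc1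
          · exact Or.inr h
        · rintro (h | h)
          · exact h ▸ hb
          · exact h ▸ hd
      · constructor
        · intro hv
          rcases (h4 v).mp (Or.inr hv) with h | h | h | h
          · exact Or.inl h
          · exact absurd (h ▸ hv) (hnand b hb)
          · exact Or.inr h
          · exact absurd (h ▸ hv) (hnand d hd)
        · rintro (h | h)
          · exact h ▸ haN
          · exact h ▸ hcN
    · have hd2 : d ∈ kuoUncov S p.2 := by
        rcases (h4 d).mpr (by tauto) with h | h
        · exact absurd h hd
        · exact h
      refine Or.inr (Or.inr (Or.inl ⟨⟨g1, ?_⟩, g2, ?_⟩)) <;> ext v <;>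
        simp only [Finset.mem_insert, Finset.mem_singleton]
      · constructor
        · intro hv
          rcases (h4 v).mp (Or.inl hv) with h | h | h | h
          · exact absurd (h ▸ hv) ha1
          · exact h
          · exact absurd (h ▸ hv) hc1
          · exact absurd (h ▸ hv) hd
        · rintro h
          exact h ▸ hb
      · constructor
        · intro hv
          rcases (h4 v).mp (Or.inr hv) with h | h | h | h
          · exact Or.inl h
          · exact absurd (h ▸ hv) (hnand b hb)
          · exact Or.inr (Or.inl h)
          · exact Or.inr (Or.inr h)
        · rintro (h | h | h)
          · exact h ▸ haN
          · exact h ▸ hcN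
          · exact h ▸ hd2
    · have hb2 : b ∈ kuoUncov S p.2 := by
        rcases (h4 b).mpr (by tauto) with h | h
        · exact absurd h hb
        · exact h
      refine Or.inr (Or.inr (Or.inr ⟨⟨g1, ?_⟩, g2, ?_⟩)) <;> ext v <;>
        simp only [Finset.mem_insert, Finset.mem_singleton]
      · constructor
        · intro hv
          rcases (h4 v).mp (Or.inl hv) with h | h | h | h
          · exact absurd (h ▸ hv) ha1
          · exact absurd (h ▸ hv) hb
          · exact absurd (h ▸ hv) hc1
          · exact h
        · rintro h
          exact h ▸ hd
      · constructor
        · intro hv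
          rcases (h4 v).mp (Or.inr hv) with h | h | h | h
          · exact Or.inl h
          · exact Or.inr (Or.inl h)
          · exact Or.inr (Or.inr h)
          · exact absurd (h ▸ hv) (hnand d hd)
        · rintro (h | h | h)
          · exact h ▸ haN
          · exact h ▸ hb2
          · exact h ▸ hcN
    · have hb2 : b ∈ kuoUncov S p.2 := by
        rcases (h4 b).mpr (by tauto) with h | h
        · exact absurd h hb
        · exact h
      have hd2 : d ∈ kuoUncov S p.2 := by
        rcases (h4 d).mpr (by tauto) with h | h
        · exact absurd h hd
        · exact h
      refine Or.inl ⟨⟨g1, ?_⟩, g2, ?_⟩ <;> ext v <;>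
        simp only [Finset.mem_insert, Finset.mem_singleton, Finset.notMem_empty, iff_false]
      · intro hv
        rcases (h4 v).mp (Or.inl hv) with h | h | h | h
        · exact ha1 (h ▸ hv)
        · exact hb (h ▸ hv)
        · exact hc1 (h ▸ hv)
        · exact hd (h ▸ hv)
      · constructor
        · intro hv
          exact (h4 v).mp (Or.inr hv)
        · rintro (h | h | h | h)
          · exact h ▸ haN
          · exact h ▸ hb2
          · exact h ▸ hcN
          · exact h ▸ hd2
  · have hmemuniv : ∀ (T1 T2 : Finset V),
        (kuoUncov S p.1 = T1) → (kuoUncov S p.2 = T2) → T1 ∪ T2 = ({a,b,c,d} : Finset V) →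
        Disjoint T1 T2 → a ∈ T2 → c ∈ T2 →
        kuoGood G p.1 → kuoGood G p.2 →
        (kuoGood G p.1 ∧ kuoGood G p.2 ∧
          kuoUncov S p.1 ∪ kuoUncov S p.2 = {a, b, c, d} ∧
          Disjoint (kuoUncov S p.1) (kuoUncov S p.2) ∧
          a ∈ kuoUncov S p.2 ∧ c ∈ kuoUncov S p.2) := by
      rintro T1 T2 rfl rfl h1 h2 h3 h4 g1 g2
      exact ⟨g1, g2, h1, h2, h3, h4⟩
    rintro (⟨⟨g1, h1⟩, g2, h2⟩ | ⟨⟨g1, h1⟩, g2, h2⟩ | ⟨⟨g1, h1⟩, g2, h2⟩ | ⟨⟨g1, h1⟩, g2, h2⟩) <;>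
      refine hmemuniv _ _ h1 h2 ?_ ?_ ?_ ?_ g1 g2
    · simp
    · simp [Finset.disjoint_left]
    · simp
    · simp
    · ext v
      simp only [Finset.mem_union, Finset.mem_insert, Finset.mem_singleton]
      try tauto
    · rw [Finset.disjoint_left]
      intro v hv
      simp only [Finset.mem_insert, Finset.mem_singleton] at *
      rcases hv with rfl | rfl
      · rintro (rfl | rfl)
        · exact hab rfl
        · exact hbc rfl
      · rintro (rfl | rfl)
        · exact had rfl
        · exact hcd rfl
    · simp
    · simp
    · ext v
      simp only [Finset.mem_union, Finset.mem_insert, Finset.mem_singleton]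
      try tauto
    · rw [Finset.disjoint_left]
      intro v hv
      simp only [Finset.mem_insert, Finset.mem_singleton] at *
      subst hv
      rintro (rfl | rfl | rfl)
      · exact hab rfl
      · exact hbc rfl
      · exact hbd rfl
    · simp
    · simp
    · ext v
      simp only [Finset.mem_union, Finset.mem_insert, Finset.mem_singleton]
      try tauto
    · rw [Finset.disjoint_left]
      intro v hv
      simp only [Finset.mem_insert, Finset.mem_singleton] at *
      subst hv
      rintro (rfl | rfl | rfl)
      · exact had rfl
      · exact hbd rfl
      · exact hcd rfl
    · simp
    · simp

end Assembly


section Assembly2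

variable {R : Type*} [CommRing R]

lemma kuo_Q2_iff (G : SimpleGraph V) (S : Finset V) (a b c d : V)
    (hab : a ≠ b) (hac : a ≠ c) (had : a ≠ d) (hbc : b ≠ c) (hbd : b ≠ d) (hcd : c ≠ d)
    (p : Finset (Sym2 V) × Finset (Sym2 V)) :
    (kuoGood G p.1 ∧ kuoGood G p.2 ∧
        kuoUncov S p.1 ∪ kuoUncov S p.2 = {a, b, c, d} ∧
        Disjoint (kuoUncov S p.1) (kuoUncov S p.2) ∧
        a ∈ kuoUncov S p.1 ∧ c ∈ kuoUncov S p.2) ↔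
      (((kuoGood G p.1 ∧ kuoUncov S p.1 = {a, d}) ∧ (kuoGood G p.2 ∧ kuoUncov S p.2 = {b, c})) ∨
       ((kuoGood G p.1 ∧ kuoUncov S p.1 = {a, b}) ∧ (kuoGood G p.2 ∧ kuoUncov S p.2 = {c, d})) ∨
       ((kuoGood G p.1 ∧ kuoUncov S p.1 = {a}) ∧ (kuoGood G p.2 ∧ kuoUncov S p.2 = {b, c, d})) ∨
       ((kuoGood G p.1 ∧ kuoUncov S p.1 = {a, b, d}) ∧ (kuoGood G p.2 ∧ kuoUncov S p.2 = {c}))) := by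
  constructor
  · rintro ⟨g1, g2, hun, hdj, haM, hcN⟩
    have h4 : ∀ v, (v ∈ kuoUncov S p.1 ∨ v ∈ kuoUncov S p.2) ↔
        (v = a ∨ v = b ∨ v = c ∨ v = d) := by
      intro v
      rw [← Finset.mem_union, hun]
      simp
    have hnand : ∀ v, v ∈ kuoUncov S p.1 → v ∉ kuoUncov S p.2 := fun v h =>
      Finset.disjoint_left.mp hdj h
    have ha2 : a ∉ kuoUncov S p.2 := hnand a haM
    have hc1 : c ∉ kuoUncov S p.1 := fun h => hnand c h hcN
    by_cases hb : b ∈ kuoUncov S p.1 <;> by_cases hd : d ∈ kuoUncov S p.1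
    · -- u1 = {a,b,d}, u2 = {c}
      refine Or.inr (Or.inr (Or.inr ⟨⟨g1, ?_⟩, g2, ?_⟩)) <;> ext v <;>
        simp only [Finset.mem_insert, Finset.mem_singleton]
      · constructor
        · intro hv
          rcases (h4 v).mp (Or.inl hv) with h | h | h | h
          · exact Or.inl h
          · exact Or.inr (Or.inl h)
          · exact absurd (h ▸ hv) hc1
          · exact Or.inr (Or.inr h)
        · rintro (h | h | h)
          · exact h ▸ haM
          · exact h ▸ hb
          · exact h ▸ hd
      · constructor
        · intro hv
          rcases (h4 v).mp (Or.inr hv) with h | h | h | h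
          · exact absurd (h ▸ hv) ha2
          · exact absurd (h ▸ hv) (hnand b hb)
          · exact h
          · exact absurd (h ▸ hv) (hnand d hd)
        · rintro h
          exact h ▸ hcN
    · -- u1 = {a,b}, u2 = {c,d}
      have hd2 : d ∈ kuoUncov S p.2 := by
        rcases (h4 d).mpr (by tauto) with h | h
        · exact absurd h hd
        · exact h
      refine Or.inr (Or.inl ⟨⟨g1, ?_⟩, g2, ?_⟩) <;> ext v <;>
        simp only [Finset.mem_insert, Finset.mem_singleton]
      · constructor
        · intro hv
          rcases (h4 v).mp (Or.inl hv) with h | h | h | h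
          · exact Or.inl h
          · exact Or.inr h
          · exact absurd (h ▸ hv) hc1
          · exact absurd (h ▸ hv) hd
        · rintro (h | h)
          · exact h ▸ haM
          · exact h ▸ hb
      · constructor
        · intro hv
          rcases (h4 v).mp (Or.inr hv) with h | h | h | h
          · exact absurd (h ▸ hv) ha2
          · exact absurd (h ▸ hv) (hnand b hb)
          · exact Or.inl h
          · exact Or.inr h
        · rintro (h | h)
          · exact h ▸ hcN
          · exact h ▸ hd2
    · -- u1 = {a,d}, u2 = {b,c}
      have hb2 : b ∈ kuoUncov S p.2 := by
        rcases (h4 b).mpr (by tauto) with h | h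
        · exact absurd h hb
        · exact h
      refine Or.inl ⟨⟨g1, ?_⟩, g2, ?_⟩ <;> ext v <;>
        simp only [Finset.mem_insert, Finset.mem_singleton]
      · constructor
        · intro hv
          rcases (h4 v).mp (Or.inl hv) with h | h | h | h
          · exact Or.inl h
          · exact absurd (h ▸ hv) hb
          · exact absurd (h ▸ hv) hc1
          · exact Or.inr h
        · rintro (h | h)
          · exact h ▸ haM
          · exact h ▸ hd
      · constructor
        · intro hv
          rcases (h4 v).mp (Or.inr hv) with h | h | h | h
          · exact absurd (h ▸ hv) ha2
          · exact Or.inl h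
          · exact Or.inr h
          · exact absurd (h ▸ hv) (hnand d hd)
        · rintro (h | h)
          · exact h ▸ hb2
          · exact h ▸ hcN
    · -- u1 = {a}, u2 = {b,c,d}
      have hb2 : b ∈ kuoUncov S p.2 := by
        rcases (h4 b).mpr (by tauto) with h | h
        · exact absurd h hb
        · exact h
      have hd2 : d ∈ kuoUncov S p.2 := by
        rcases (h4 d).mpr (by tauto) with h | h
        · exact absurd h hd
        · exact h
      refine Or.inr (Or.inr (Or.inl ⟨⟨g1, ?_⟩, g2, ?_⟩)) <;> ext v <;>
        simp only [Finset.mem_insert, Finset.mem_singleton]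
      · constructor
        · intro hv
          rcases (h4 v).mp (Or.inl hv) with h | h | h | h
          · exact h
          · exact absurd (h ▸ hv) hb
          · exact absurd (h ▸ hv) hc1
          · exact absurd (h ▸ hv) hd
        · rintro h
          exact h ▸ haM
      · constructor
        · intro hv
          rcases (h4 v).mp (Or.inr hv) with h | h | h | h
          · exact absurd (h ▸ hv) ha2
          · exact Or.inl h
          · exact Or.inr (Or.inl h)
          · exact Or.inr (Or.inr h)
        · rintro (h | h | h)
          · exact h ▸ hb2
          · exact h ▸ hcN
          · exact h ▸ hd2
  · have hmemuniv : ∀ (T1 T2 : Finset V),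
        (kuoUncov S p.1 = T1) → (kuoUncov S p.2 = T2) → T1 ∪ T2 = ({a,b,c,d} : Finset V) →
        Disjoint T1 T2 → a ∈ T1 → c ∈ T2 →
        kuoGood G p.1 → kuoGood G p.2 →
        (kuoGood G p.1 ∧ kuoGood G p.2 ∧
          kuoUncov S p.1 ∪ kuoUncov S p.2 = {a, b, c, d} ∧
          Disjoint (kuoUncov S p.1) (kuoUncov S p.2) ∧
          a ∈ kuoUncov S p.1 ∧ c ∈ kuoUncov S p.2) := by
      rintro T1 T2 rfl rfl h1 h2 h3 h4 g1 g2
      exact ⟨g1, g2, h1, h2, h3, h4⟩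
    rintro (⟨⟨g1, h1⟩, g2, h2⟩ | ⟨⟨g1, h1⟩, g2, h2⟩ | ⟨⟨g1, h1⟩, g2, h2⟩ | ⟨⟨g1, h1⟩, g2, h2⟩) <;>
      refine hmemuniv _ _ h1 h2 ?_ ?_ ?_ ?_ g1 g2
    · ext v
      simp only [Finset.mem_union, Finset.mem_insert, Finset.mem_singleton]
      try tauto
    · rw [Finset.disjoint_left]
      intro v hv
      simp only [Finset.mem_insert, Finset.mem_singleton] at *
      rcases hv with rfl | rfl
      · rintro (rfl | rfl)
        · exact hab rfl
        · exact hac rfl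
      · rintro (rfl | rfl)
        · exact hbd rfl
        · exact hcd rfl
    · simp
    · simp
    · ext v
      simp only [Finset.mem_union, Finset.mem_insert, Finset.mem_singleton]
      try tauto
    · rw [Finset.disjoint_left]
      intro v hv
      simp only [Finset.mem_insert, Finset.mem_singleton] at *
      rcases hv with rfl | rfl
      · rintro (rfl | rfl)
        · exact hac rfl
        · exact had rfl
      · rintro (rfl | rfl)
        · exact hbc rfl
        · exact hbd rfl
    · simp
    · simp
    · ext v
      simp only [Finset.mem_union, Finset.mem_insert, Finset.mem_singleton]
      try tauto
    · rw [Finset.disjoint_left]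
      intro v hv
      simp only [Finset.mem_insert, Finset.mem_singleton] at *
      subst hv
      rintro (rfl | rfl | rfl)
      · exact hab rfl
      · exact hac rfl
      · exact had rfl
    · simp
    · simp
    · ext v
      simp only [Finset.mem_union, Finset.mem_insert, Finset.mem_singleton]
      try tauto
    · rw [Finset.disjoint_left]
      intro v hv
      simp only [Finset.mem_insert, Finset.mem_singleton] at *
      rcases hv with rfl | rfl | rfl
      · rintro rfl
        exact hac rfl
      · rintro rfl
        exact hbc rfl
      · rintro rfl
        exact hcd rfl
    · simp
    · simp

lemma kuo_bij (G : SimpleGraph V) (w : Sym2 V → R) (S : Finset V) (a b c d : V)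
    (hsep : Separated G S a b c d)
    (hnc : ¬ ∃ (P : G.Walk a c) (Q : G.Walk b d), P.IsPath ∧ Q.IsPath ∧ WalkDisjoint P Q)
    (hab : a ≠ b) (hac : a ≠ c) (had : a ≠ d) (hbc : b ≠ c) (hbd : b ≠ d) (hcd : c ≠ d)
    (haS : a ∉ S) (hbS : b ∉ S) (hcS : c ∉ S) (hdS : d ∉ S) :
    ∑ p ∈ Finset.univ.filter (fun p : Finset (Sym2 V) × Finset (Sym2 V) =>
        kuoGood G p.1 ∧ kuoGood G p.2 ∧
        kuoUncov S p.1 ∪ kuoUncov S p.2 = {a, b, c, d} ∧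
        Disjoint (kuoUncov S p.1) (kuoUncov S p.2) ∧
        a ∈ kuoUncov S p.2 ∧ c ∈ kuoUncov S p.2),
      (∏ e ∈ p.1, w e) * ∏ e ∈ p.2, w e
    = ∑ p ∈ Finset.univ.filter (fun p : Finset (Sym2 V) × Finset (Sym2 V) =>
        kuoGood G p.1 ∧ kuoGood G p.2 ∧
        kuoUncov S p.1 ∪ kuoUncov S p.2 = {a, b, c, d} ∧
        Disjoint (kuoUncov S p.1) (kuoUncov S p.2) ∧
        a ∈ kuoUncov S p.1 ∧ c ∈ kuoUncov S p.2),
      (∏ e ∈ p.1, w e) * ∏ e ∈ p.2, w e := by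
  apply Finset.sum_nbij'
    (i := fun p : Finset (Sym2 V) × Finset (Sym2 V) =>
      (p.1 ∆ kuoComp (p.1 ∆ p.2) a, p.2 ∆ kuoComp (p.1 ∆ p.2) a))
    (j := fun p : Finset (Sym2 V) × Finset (Sym2 V) =>
      (p.1 ∆ kuoComp (p.1 ∆ p.2) a, p.2 ∆ kuoComp (p.1 ∆ p.2) a))
  · intro p hp
    rw [Finset.mem_filter] at hp ⊢
    obtain ⟨-, g1, g2, hun, hdj, haN, hcN⟩ := hp
    obtain ⟨k1, k2, k3, k4, k5, k6, -, -⟩ := kuo_swap G w S a b c d hsep hnc hab hac had hbc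
      hbd hcd haS hbS hcS hdS p.1 p.2 g1 g2 hun hdj hcN
    exact ⟨Finset.mem_univ _, k1, k2, k3, k4,
      k6.mpr (fun h => Finset.disjoint_left.mp hdj h haN), k5⟩
  · intro p hp
    rw [Finset.mem_filter] at hp ⊢
    obtain ⟨-, g1, g2, hun, hdj, haM, hcN⟩ := hp
    obtain ⟨k1, k2, k3, k4, k5, k6, -, -⟩ := kuo_swap G w S a b c d hsep hnc hab hac had hbc
      hbd hcd haS hbS hcS hdS p.1 p.2 g1 g2 hun hdj hcN
    have ha' : a ∉ kuoUncov S (p.1 ∆ kuoComp (p.1 ∆ p.2) a) := fun h => (k6.mp h) haM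
    have ha2 : a ∈ kuoUncov S (p.2 ∆ kuoComp (p.1 ∆ p.2) a) := by
      have hmem : a ∈ kuoUncov S (p.1 ∆ kuoComp (p.1 ∆ p.2) a) ∪
          kuoUncov S (p.2 ∆ kuoComp (p.1 ∆ p.2) a) := by
        rw [k3]; simp
      rcases Finset.mem_union.mp hmem with h | h
      · exact absurd h ha'
      · exact h
    exact ⟨Finset.mem_univ _, k1, k2, k3, k4, ha2, k5⟩
  · intro p hp
    rw [Finset.mem_filter] at hp
    obtain ⟨-, g1, g2, hun, hdj, haN, hcN⟩ := hp
    obtain ⟨-, -, -, -, -, -, k7, -⟩ := kuo_swap G w S a b c d hsep hnc hab hac had hbc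
      hbd hcd haS hbS hcS hdS p.1 p.2 g1 g2 hun hdj hcN
    show ((p.1 ∆ kuoComp (p.1 ∆ p.2) a) ∆
        kuoComp ((p.1 ∆ kuoComp (p.1 ∆ p.2) a) ∆ (p.2 ∆ kuoComp (p.1 ∆ p.2) a)) a,
      (p.2 ∆ kuoComp (p.1 ∆ p.2) a) ∆
        kuoComp ((p.1 ∆ kuoComp (p.1 ∆ p.2) a) ∆ (p.2 ∆ kuoComp (p.1 ∆ p.2) a)) a) = p
    rw [k7, symmDiff_symmDiff_cancel_right, symmDiff_symmDiff_cancel_right]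
  · intro p hp
    rw [Finset.mem_filter] at hp
    obtain ⟨-, g1, g2, hun, hdj, haM, hcN⟩ := hp
    obtain ⟨-, -, -, -, -, -, k7, -⟩ := kuo_swap G w S a b c d hsep hnc hab hac had hbc
      hbd hcd haS hbS hcS hdS p.1 p.2 g1 g2 hun hdj hcN
    show ((p.1 ∆ kuoComp (p.1 ∆ p.2) a) ∆
        kuoComp ((p.1 ∆ kuoComp (p.1 ∆ p.2) a) ∆ (p.2 ∆ kuoComp (p.1 ∆ p.2) a)) a,
      (p.2 ∆ kuoComp (p.1 ∆ p.2) a) ∆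
        kuoComp ((p.1 ∆ kuoComp (p.1 ∆ p.2) a) ∆ (p.2 ∆ kuoComp (p.1 ∆ p.2) a)) a) = p
    rw [k7, symmDiff_symmDiff_cancel_right, symmDiff_symmDiff_cancel_right]
  · intro p hp
    rw [Finset.mem_filter] at hp
    obtain ⟨-, g1, g2, hun, hdj, haN, hcN⟩ := hp
    obtain ⟨-, -, -, -, -, -, -, k8⟩ := kuo_swap G w S a b c d hsep hnc hab hac had hbc
      hbd hcd haS hbS hcS hdS p.1 p.2 g1 g2 hun hdj hcN
    exact k8.symm

end Assembly2

/-- **Free-boundary Kuo condensation, eight-term version** (Theorem 1 of the paper).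
`G` is a weighted planar graph with `a, b, c, d` in cyclic order on a face whose boundary
cycle is `L`; `S` is a set of vertices of that face, disjoint from `{a,b,c,d}` and
`a,c`-separated.  Then the eight-term matching identity holds, where deleting vertices is
expressed by restricting matchings to the complementary vertex set. -/
theorem free_boundary_kuo_eight_term
    (G : SimpleGraph V) (w : Sym2 V → R) (L : List V) (S : Finset V) (a b c d : V)
    (hface : FaceConfig G L a b c d)
    (hSL : ∀ s ∈ S, s ∈ L)
    (hdisj : Disjoint S ({a, b, c, d} : Finset V))
    (hsep : Separated G S a b c d) :
    Mf G w S Finset.univ * Mf G w S (Finset.univ \ {a, b, c, d}) +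
      Mf G w S (Finset.univ \ {b, d}) * Mf G w S (Finset.univ \ {a, c}) +
      Mf G w S (Finset.univ \ {b}) * Mf G w S (Finset.univ \ {a, c, d}) +
      Mf G w S (Finset.univ \ {d}) * Mf G w S (Finset.univ \ {a, b, c}) =
    Mf G w S (Finset.univ \ {a, d}) * Mf G w S (Finset.univ \ {b, c}) +
      Mf G w S (Finset.univ \ {a, b}) * Mf G w S (Finset.univ \ {c, d}) +
      Mf G w S (Finset.univ \ {a}) * Mf G w S (Finset.univ \ {b, c, d}) +
      Mf G w S (Finset.univ \ {a, b, d}) * Mf G w S (Finset.univ \ {c}) := by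
    classical
  obtain ⟨L', hrot, i, j, k, l, hij, hjk, hkl, hia, hjb, hkc, hld⟩ := hface.cyclic
  have hnodup : L'.Nodup := (hrot.nodup_iff).mp hface.nodup
  have hgne : ∀ {i' j' : Fin L'.length}, i' ≠ j' → L'.get i' ≠ L'.get j' :=
    fun hne h => hne ((hnodup.get_inj_iff).mp h)
  have hab : a ≠ b := by rw [← hia, ← hjb]; exact hgne (Fin.ne_of_lt hij)
  have hac : a ≠ c := by rw [← hia, ← hkc]; exact hgne (Fin.ne_of_lt (hij.trans hjk))
  have had : a ≠ d := by
    rw [← hia, ← hld]; exact hgne (Fin.ne_of_lt (hij.trans (hjk.trans hkl)))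
  have hbc : b ≠ c := by rw [← hjb, ← hkc]; exact hgne (Fin.ne_of_lt hjk)
  have hbd : b ≠ d := by rw [← hjb, ← hld]; exact hgne (Fin.ne_of_lt (hjk.trans hkl))
  have hcd : c ≠ d := by rw [← hkc, ← hld]; exact hgne (Fin.ne_of_lt hkl)
  have haS : a ∉ S := fun h => (Finset.disjoint_left.mp hdisj h) (by simp)
  have hbS : b ∉ S := fun h => (Finset.disjoint_left.mp hdisj h) (by simp)
  have hcS : c ∉ S := fun h => (Finset.disjoint_left.mp hdisj h) (by simp)
  have hdS : d ∉ S := fun h => (Finset.disjoint_left.mp hdisj h) (by simp)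
  have hnc : ¬ ∃ (P : G.Walk a c) (Q : G.Walk b d), P.IsPath ∧ Q.IsPath ∧ WalkDisjoint P Q := by
    rintro ⟨P, Q, hP, hQ, hPQ⟩
    refine hface.noncrossing L' hrot i j k l hij hjk hkl
      ⟨P.copy hia.symm hkc.symm, Q.copy hjb.symm hld.symm,
        (Walk.isPath_copy _ _ _).mpr hP, (Walk.isPath_copy _ _ _).mpr hQ, ?_⟩
    intro z hz hz'
    rw [Walk.support_copy] at hz hz'
    exact hPQ z hz hz'
  have hsub : ∀ (T : Finset V), (∀ v ∈ T, v = a ∨ v = b ∨ v = c ∨ v = d) →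
      ∀ v ∈ T, v ∉ S := by
    intro T hT v hv
    rcases hT v hv with rfl | rfl | rfl | rfl <;> assumption
  have hprod : ∀ (T₁ T₂ : Finset V), (∀ v ∈ T₁, v ∉ S) → (∀ v ∈ T₂, v ∉ S) →
      Mf G w S (Finset.univ \ T₁) * Mf G w S (Finset.univ \ T₂) =
      ∑ p ∈ Finset.univ.filter (fun p : Finset (Sym2 V) × Finset (Sym2 V) =>
          (kuoGood G p.1 ∧ kuoUncov S p.1 = T₁) ∧ (kuoGood G p.2 ∧ kuoUncov S p.2 = T₂)),
        (∏ e ∈ p.1, w e) * ∏ e ∈ p.2, w e := by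
    intro T₁ T₂ h₁ h₂
    rw [kuo_Mf_eq G w S T₁ h₁, kuo_Mf_eq G w S T₂ h₂, Finset.sum_mul_sum]
    rw [← Finset.sum_product' (f := fun M N : Finset (Sym2 V) =>
      (∏ e ∈ M, w e) * ∏ e ∈ N, w e)]
    rw [← Finset.filter_product, Finset.univ_product_univ]
  have h0 : Mf G w S (Finset.univ : Finset V) =
      Mf G w S ((Finset.univ : Finset V) \ (∅ : Finset V)) := by
    rw [Finset.sdiff_empty]
  rw [h0]
  rw [hprod ∅ {a, b, c, d} (by simp) (hsub _ (by intro v hv; simp at hv; tauto)),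
    hprod {b, d} {a, c} (hsub _ (by intro v hv; simp at hv; tauto))
      (hsub _ (by intro v hv; simp at hv; tauto)),
    hprod {b} {a, c, d} (hsub _ (by intro v hv; simp at hv; tauto))
      (hsub _ (by intro v hv; simp at hv; tauto)),
    hprod {d} {a, b, c} (hsub _ (by intro v hv; simp at hv; tauto))
      (hsub _ (by intro v hv; simp at hv; tauto)),
    hprod {a, d} {b, c} (hsub _ (by intro v hv; simp at hv; tauto))
      (hsub _ (by intro v hv; simp at hv; tauto)),
    hprod {a, b} {c, d} (hsub _ (by intro v hv; simp at hv; tauto))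
      (hsub _ (by intro v hv; simp at hv; tauto)),
    hprod {a} {b, c, d} (hsub _ (by intro v hv; simp at hv; tauto))
      (hsub _ (by intro v hv; simp at hv; tauto)),
    hprod {a, b, d} {c} (hsub _ (by intro v hv; simp at hv; tauto))
      (hsub _ (by intro v hv; simp at hv; tauto))]
  have neL1 : (∅ : Finset V) ≠ {b, d} := (kuo_ne_of_mem b (by simp) (by simp)).symm
  have neL2 : (∅ : Finset V) ≠ {b} := (kuo_ne_of_mem b (by simp) (by simp)).symm
  have neL3 : (∅ : Finset V) ≠ {d} := (kuo_ne_of_mem d (by simp) (by simp)).symm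
  have neL4 : ({b, d} : Finset V) ≠ {b} := kuo_ne_of_mem d (by simp) (by simp [Ne.symm hbd])
  have neL5 : ({b, d} : Finset V) ≠ {d} := kuo_ne_of_mem b (by simp) (by simp [hbd])
  have neL6 : ({b} : Finset V) ≠ {d} := kuo_ne_of_mem b (by simp) (by simp [hbd])
  have neR1 : ({a, d} : Finset V) ≠ {a, b} :=
    kuo_ne_of_mem d (by simp) (by simp [Ne.symm had, Ne.symm hbd])
  have neR2 : ({a, d} : Finset V) ≠ {a} := kuo_ne_of_mem d (by simp) (by simp [Ne.symm had])
  have neR3 : ({a, d} : Finset V) ≠ {a, b, d} :=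
    (kuo_ne_of_mem b (by simp) (by simp [Ne.symm hab, hbd])).symm
  have neR4 : ({a, b} : Finset V) ≠ {a} := kuo_ne_of_mem b (by simp) (by simp [Ne.symm hab])
  have neR5 : ({a, b} : Finset V) ≠ {a, b, d} :=
    (kuo_ne_of_mem d (by simp) (by simp [Ne.symm had, Ne.symm hbd])).symm
  have neR6 : ({a} : Finset V) ≠ {a, b, d} :=
    (kuo_ne_of_mem b (by simp) (by simp [Ne.symm hab])).symm
  have hxL : ∀ p : Finset (Sym2 V) × Finset (Sym2 V),
      ¬(((kuoGood G p.1 ∧ kuoUncov S p.1 = ∅) ∧ (kuoGood G p.2 ∧ kuoUncov S p.2 = {a, b, c, d})) ∧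
        ((kuoGood G p.1 ∧ kuoUncov S p.1 = {b, d}) ∧ (kuoGood G p.2 ∧ kuoUncov S p.2 = {a, c}))) ∧
      ¬(((kuoGood G p.1 ∧ kuoUncov S p.1 = ∅) ∧ (kuoGood G p.2 ∧ kuoUncov S p.2 = {a, b, c, d})) ∧
        ((kuoGood G p.1 ∧ kuoUncov S p.1 = {b}) ∧ (kuoGood G p.2 ∧ kuoUncov S p.2 = {a, c, d}))) ∧
      ¬(((kuoGood G p.1 ∧ kuoUncov S p.1 = ∅) ∧ (kuoGood G p.2 ∧ kuoUncov S p.2 = {a, b, c, d})) ∧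
        ((kuoGood G p.1 ∧ kuoUncov S p.1 = {d}) ∧ (kuoGood G p.2 ∧ kuoUncov S p.2 = {a, b, c}))) ∧
      ¬(((kuoGood G p.1 ∧ kuoUncov S p.1 = {b, d}) ∧ (kuoGood G p.2 ∧ kuoUncov S p.2 = {a, c})) ∧
        ((kuoGood G p.1 ∧ kuoUncov S p.1 = {b}) ∧ (kuoGood G p.2 ∧ kuoUncov S p.2 = {a, c, d}))) ∧
      ¬(((kuoGood G p.1 ∧ kuoUncov S p.1 = {b, d}) ∧ (kuoGood G p.2 ∧ kuoUncov S p.2 = {a, c})) ∧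
        ((kuoGood G p.1 ∧ kuoUncov S p.1 = {d}) ∧ (kuoGood G p.2 ∧ kuoUncov S p.2 = {a, b, c}))) ∧
      ¬(((kuoGood G p.1 ∧ kuoUncov S p.1 = {b}) ∧ (kuoGood G p.2 ∧ kuoUncov S p.2 = {a, c, d})) ∧
        ((kuoGood G p.1 ∧ kuoUncov S p.1 = {d}) ∧ (kuoGood G p.2 ∧ kuoUncov S p.2 = {a, b, c}))) := by
    intro p
    refine ⟨?_, ?_, ?_, ?_, ?_, ?_⟩ <;> rintro ⟨⟨⟨-, h1⟩, -⟩, ⟨⟨-, h2⟩, -⟩⟩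
    · exact neL1 (h1.symm.trans h2)
    · exact neL2 (h1.symm.trans h2)
    · exact neL3 (h1.symm.trans h2)
    · exact neL4 (h1.symm.trans h2)
    · exact neL5 (h1.symm.trans h2)
    · exact neL6 (h1.symm.trans h2)
  have hxR : ∀ p : Finset (Sym2 V) × Finset (Sym2 V),
      ¬(((kuoGood G p.1 ∧ kuoUncov S p.1 = {a, d}) ∧ (kuoGood G p.2 ∧ kuoUncov S p.2 = {b, c})) ∧
        ((kuoGood G p.1 ∧ kuoUncov S p.1 = {a, b}) ∧ (kuoGood G p.2 ∧ kuoUncov S p.2 = {c, d}))) ∧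
      ¬(((kuoGood G p.1 ∧ kuoUncov S p.1 = {a, d}) ∧ (kuoGood G p.2 ∧ kuoUncov S p.2 = {b, c})) ∧
        ((kuoGood G p.1 ∧ kuoUncov S p.1 = {a}) ∧ (kuoGood G p.2 ∧ kuoUncov S p.2 = {b, c, d}))) ∧
      ¬(((kuoGood G p.1 ∧ kuoUncov S p.1 = {a, d}) ∧ (kuoGood G p.2 ∧ kuoUncov S p.2 = {b, c})) ∧
        ((kuoGood G p.1 ∧ kuoUncov S p.1 = {a, b, d}) ∧ (kuoGood G p.2 ∧ kuoUncov S p.2 = {c}))) ∧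
      ¬(((kuoGood G p.1 ∧ kuoUncov S p.1 = {a, b}) ∧ (kuoGood G p.2 ∧ kuoUncov S p.2 = {c, d})) ∧
        ((kuoGood G p.1 ∧ kuoUncov S p.1 = {a}) ∧ (kuoGood G p.2 ∧ kuoUncov S p.2 = {b, c, d}))) ∧
      ¬(((kuoGood G p.1 ∧ kuoUncov S p.1 = {a, b}) ∧ (kuoGood G p.2 ∧ kuoUncov S p.2 = {c, d})) ∧
        ((kuoGood G p.1 ∧ kuoUncov S p.1 = {a, b, d}) ∧ (kuoGood G p.2 ∧ kuoUncov S p.2 = {c}))) ∧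
      ¬(((kuoGood G p.1 ∧ kuoUncov S p.1 = {a}) ∧ (kuoGood G p.2 ∧ kuoUncov S p.2 = {b, c, d})) ∧
        ((kuoGood G p.1 ∧ kuoUncov S p.1 = {a, b, d}) ∧ (kuoGood G p.2 ∧ kuoUncov S p.2 = {c}))) := by
    intro p
    refine ⟨?_, ?_, ?_, ?_, ?_, ?_⟩ <;> rintro ⟨⟨⟨-, h1⟩, -⟩, ⟨⟨-, h2⟩, -⟩⟩
    · exact neR1 (h1.symm.trans h2)
    · exact neR2 (h1.symm.trans h2)
    · exact neR3 (h1.symm.trans h2)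
    · exact neR4 (h1.symm.trans h2)
    · exact neR5 (h1.symm.trans h2)
    · exact neR6 (h1.symm.trans h2)
  rw [kuo_sum_ite4 Finset.univ
      (fun p : Finset (Sym2 V) × Finset (Sym2 V) => (∏ e ∈ p.1, w e) * ∏ e ∈ p.2, w e)
      _ _ _ _ hxL,
    kuo_sum_ite4 Finset.univ
      (fun p : Finset (Sym2 V) × Finset (Sym2 V) => (∏ e ∈ p.1, w e) * ∏ e ∈ p.2, w e)
      _ _ _ _ hxR]
  have hfL : Finset.univ.filter (fun p : Finset (Sym2 V) × Finset (Sym2 V) =>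
      ((kuoGood G p.1 ∧ kuoUncov S p.1 = ∅) ∧ (kuoGood G p.2 ∧ kuoUncov S p.2 = {a, b, c, d})) ∨
      ((kuoGood G p.1 ∧ kuoUncov S p.1 = {b, d}) ∧ (kuoGood G p.2 ∧ kuoUncov S p.2 = {a, c})) ∨
      ((kuoGood G p.1 ∧ kuoUncov S p.1 = {b}) ∧ (kuoGood G p.2 ∧ kuoUncov S p.2 = {a, c, d})) ∨
      ((kuoGood G p.1 ∧ kuoUncov S p.1 = {d}) ∧ (kuoGood G p.2 ∧ kuoUncov S p.2 = {a, b, c}))) =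
    Finset.univ.filter (fun p : Finset (Sym2 V) × Finset (Sym2 V) =>
      kuoGood G p.1 ∧ kuoGood G p.2 ∧
      kuoUncov S p.1 ∪ kuoUncov S p.2 = {a, b, c, d} ∧
      Disjoint (kuoUncov S p.1) (kuoUncov S p.2) ∧
      a ∈ kuoUncov S p.2 ∧ c ∈ kuoUncov S p.2) :=
    Finset.filter_congr (fun p _ =>
      (kuo_Q1_iff G S a b c d hab hac had hbc hbd hcd p).symm)
  have hfR : Finset.univ.filter (fun p : Finset (Sym2 V) × Finset (Sym2 V) =>
      ((kuoGood G p.1 ∧ kuoUncov S p.1 = {a, d}) ∧ (kuoGood G p.2 ∧ kuoUncov S p.2 = {b, c})) ∨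
      ((kuoGood G p.1 ∧ kuoUncov S p.1 = {a, b}) ∧ (kuoGood G p.2 ∧ kuoUncov S p.2 = {c, d})) ∨
      ((kuoGood G p.1 ∧ kuoUncov S p.1 = {a}) ∧ (kuoGood G p.2 ∧ kuoUncov S p.2 = {b, c, d})) ∨
      ((kuoGood G p.1 ∧ kuoUncov S p.1 = {a, b, d}) ∧ (kuoGood G p.2 ∧ kuoUncov S p.2 = {c}))) =
    Finset.univ.filter (fun p : Finset (Sym2 V) × Finset (Sym2 V) =>
      kuoGood G p.1 ∧ kuoGood G p.2 ∧
      kuoUncov S p.1 ∪ kuoUncov S p.2 = {a, b, c, d} ∧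
      Disjoint (kuoUncov S p.1) (kuoUncov S p.2) ∧
      a ∈ kuoUncov S p.1 ∧ c ∈ kuoUncov S p.2) :=
    Finset.filter_congr (fun p _ =>
      (kuo_Q2_iff G S a b c d hab hac had hbc hbd hcd p).symm)
  rw [hfL, hfR]
  exact kuo_bij G w S a b c d hsep hnc hab hac had hbc hbd hcd haS hbS hcS hdS
end

section
/- Let G be a finite weighted planar graph with vertices a, b, c, d in cyclic order on a face F, and S a subset of the vertices of F disjoint from {a,b,c,d} that is both a,c-separated and b,d-separated. Then M_f(G)·M_f(G∖{a,b,c,d}) + M_f(G∖{b,d})·M_f(G∖{a,c}) = M_f(G∖{a,d})·M_f(G∖{b,c}) + M_f(G∖{a,b})·M_f(G∖{c,d}). -/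
open scoped Classical

variable {V : Type*} [Fintype V] [DecidableEq V] {R : Type*} [CommRing R]

section KuoAux
set_option linter.unusedSectionVars false
set_option linter.unusedVariables false
set_option maxHeartbeats 1000000
open scoped symmDiff

/-- v is matched by M -/
def mOn (M : Finset (Sym2 V)) (v : V) : Prop := ∃ e ∈ M, v ∈ e

/-- graph from an edge finset -/
def Hgr (D : Finset (Sym2 V)) : SimpleGraph V where
  Adj x y := x ≠ y ∧ s(x, y) ∈ D
  symm := ⟨by
    intro x y h
    exact ⟨h.1.symm, by rw [Sym2.eq_swap]; exact h.2⟩⟩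
  loopless := ⟨fun x h => h.1 rfl⟩

/-- edges of D touching W -/
noncomputable def swC (D : Finset (Sym2 V)) (W : Set V) : Finset (Sym2 V) :=
  D.filter (fun e => ∃ v ∈ e, v ∈ W)

lemma swC_subset (D : Finset (Sym2 V)) (W : Set V) : swC D W ⊆ D := Finset.filter_subset _ _

lemma mem_swC {D : Finset (Sym2 V)} {W : Set V} {e : Sym2 V} :
    e ∈ swC D W ↔ e ∈ D ∧ ∃ v ∈ e, v ∈ W := by
  simp [swC]

lemma symmDiff_symmDiff_cancel' (M C : Finset (Sym2 V)) : (M ∆ C) ∆ C = M := by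
  ext e; simp [Finset.mem_symmDiff]; try tauto

lemma symmDiff_swap_eq (M1 M2 C : Finset (Sym2 V)) : (M1 ∆ C) ∆ (M2 ∆ C) = M1 ∆ M2 := by
  ext e; simp [Finset.mem_symmDiff]; try tauto

/-- matching uniqueness helper -/
lemma matchUnique {M : Finset (Sym2 V)}
    (h : ∀ e ∈ M, ∀ f ∈ M, e ≠ f → ∀ v : V, v ∈ e → v ∉ f)
    {e f : Sym2 V} {v : V} (he : e ∈ M) (hf : f ∈ M) (hve : v ∈ e) (hvf : v ∈ f) : e = f := by
  by_contra hne
  exact h e he f hf hne v hve hvf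

section Swap

variable {M1 M2 : Finset (Sym2 V)} {W : Set V}

/-- closedness of W under adjacency of Hgr D -/
def WClosed (D : Finset (Sym2 V)) (W : Set V) : Prop :=
  ∀ x ∈ W, ∀ y : V, (Hgr D).Adj x y → y ∈ W

lemma swC_all_mem (hND : ∀ e ∈ M1 ∆ M2, ¬ e.IsDiag) (hW : WClosed (M1 ∆ M2) W)
    {e : Sym2 V} (he : e ∈ swC (M1 ∆ M2) W) : ∀ v ∈ e, v ∈ W := by
  rw [mem_swC] at he
  obtain ⟨heD, u, hue, huW⟩ := he
  induction e using Sym2.ind with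
  | _ x y =>
    have hxy : x ≠ y := by
      intro h; exact hND _ heD (by simp [h, Sym2.isDiag_iff_proj_eq])
    rw [Sym2.mem_iff] at hue
    intro v hv
    rw [Sym2.mem_iff] at hv
    rcases hue with rfl | rfl
    · rcases hv with rfl | rfl
      · exact huW
      · exact hW u huW v ⟨hxy, heD⟩
    · rcases hv with rfl | rfl
      · exact hW u huW v ⟨hxy.symm, by rwa [Sym2.eq_swap]⟩
      · exact huW

/-- membership unfolding for the swapped matching -/
lemma mem_swap_iff {C : Finset (Sym2 V)} {e : Sym2 V} :
    e ∈ M1 ∆ C ↔ (e ∈ M1 ∧ e ∉ C) ∨ (e ∈ C ∧ e ∉ M1) := by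
  simp [Finset.mem_symmDiff]; try tauto

/-- status of a vertex outside W is unchanged -/
lemma swap_mOn_notin (hND : ∀ e ∈ M1 ∆ M2, ¬ e.IsDiag) (hW : WClosed (M1 ∆ M2) W)
    {v : V} (hvW : v ∉ W) :
    mOn (M1 ∆ swC (M1 ∆ M2) W) v ↔ mOn M1 v := by
  constructor
  · rintro ⟨e, he, hve⟩
    rw [mem_swap_iff] at he
    rcases he with ⟨h1, _⟩ | ⟨hC, _⟩
    · exact ⟨e, h1, hve⟩
    · exact absurd (swC_all_mem hND hW hC v hve) hvW
  · rintro ⟨e, he, hve⟩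
    refine ⟨e, ?_, hve⟩
    rw [mem_swap_iff]
    left
    refine ⟨he, fun hC => hvW (swC_all_mem hND hW hC v hve)⟩

/-- status of a vertex in W becomes that of the other matching -/
lemma swap_mOn_in (hND : ∀ e ∈ M1 ∆ M2, ¬ e.IsDiag) (hW : WClosed (M1 ∆ M2) W)
    {v : V} (hvW : v ∈ W) :
    mOn (M1 ∆ swC (M1 ∆ M2) W) v ↔ mOn M2 v := by
  constructor
  · rintro ⟨e, he, hve⟩
    rw [mem_swap_iff] at he
    rcases he with ⟨h1, hC⟩ | ⟨hC, h1⟩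
    · -- e ∈ M1, e ∉ C : then e ∉ D (else e ∈ C), hence e ∈ M2
      have heD : e ∉ M1 ∆ M2 := by
        intro hD
        exact hC (mem_swC.mpr ⟨hD, v, hve, hvW⟩)
      rw [Finset.mem_symmDiff] at heD
      push_neg at heD
      exact ⟨e, heD.1 h1, hve⟩
    · have := (mem_swC.mp hC).1
      rw [Finset.mem_symmDiff] at this
      rcases this with ⟨h1', _⟩ | ⟨h2, _⟩
      · exact absurd h1' h1
      · exact ⟨e, h2, hve⟩
  · rintro ⟨e, he, hve⟩
    by_cases h1 : e ∈ M1
    · -- common edge, survives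
      refine ⟨e, ?_, hve⟩
      rw [mem_swap_iff]
      left
      refine ⟨h1, fun hC => ?_⟩
      have := (mem_swC.mp hC).1
      rw [Finset.mem_symmDiff] at this
      tauto
    · refine ⟨e, ?_, hve⟩
      rw [mem_swap_iff]
      right
      have heD : e ∈ M1 ∆ M2 := by
        rw [Finset.mem_symmDiff]; right; exact ⟨he, h1⟩
      exact ⟨mem_swC.mpr ⟨heD, v, hve, hvW⟩, h1⟩

/-- the swapped edge set is still pairwise disjoint -/
lemma swap_pairwise
    (hm1 : ∀ e ∈ M1, ∀ f ∈ M1, e ≠ f → ∀ v : V, v ∈ e → v ∉ f)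
    (hm2 : ∀ e ∈ M2, ∀ f ∈ M2, e ≠ f → ∀ v : V, v ∈ e → v ∉ f)
    (hND : ∀ e ∈ M1 ∆ M2, ¬ e.IsDiag) (hW : WClosed (M1 ∆ M2) W) :
    ∀ e ∈ M1 ∆ swC (M1 ∆ M2) W, ∀ f ∈ M1 ∆ swC (M1 ∆ M2) W, e ≠ f →
      ∀ v : V, v ∈ e → v ∉ f := by
  have key : ∀ e ∈ M1 ∆ swC (M1 ∆ M2) W, ∀ f ∈ M1 ∆ swC (M1 ∆ M2) W,
      ∀ v : V, v ∈ e → v ∈ f → e = f := by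
    intro e he f hf v hve hvf
    rw [mem_swap_iff] at he hf
    have hCM2 : ∀ g ∈ swC (M1 ∆ M2) W, g ∉ M1 → g ∈ M2 := by
      intro g hg hg1
      have := (mem_swC.mp hg).1
      rw [Finset.mem_symmDiff] at this
      tauto
    rcases he with ⟨he1, heC⟩ | ⟨heC, he1⟩ <;> rcases hf with ⟨hf1, hfC⟩ | ⟨hfC, hf1⟩
    · exact matchUnique hm1 he1 hf1 hve hvf
    · -- e ∈ M1 \ C, f ∈ C \ M1
      have hvW : v ∈ W := swC_all_mem hND hW hfC v hvf
      by_cases heD : e ∈ M1 ∆ M2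
      · exact absurd (mem_swC.mpr ⟨heD, v, hve, hvW⟩) heC
      · rw [Finset.mem_symmDiff] at heD
        push_neg at heD
        exact matchUnique hm2 (heD.1 he1) (hCM2 f hfC hf1) hve hvf
    · have hvW : v ∈ W := swC_all_mem hND hW heC v hve
      by_cases hfD : f ∈ M1 ∆ M2
      · exact absurd (mem_swC.mpr ⟨hfD, v, hvf, hvW⟩) hfC
      · rw [Finset.mem_symmDiff] at hfD
        push_neg at hfD
        exact matchUnique hm2 (hCM2 e heC he1) (hfD.1 hf1) hve hvf
    · exact matchUnique hm2 (hCM2 e heC he1) (hCM2 f hfC hf1) hve hvf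
  intro e he f hf hne v hve hvf
  exact hne (key e he f hf v hve hvf)

end Swap

/-- the filter predicate of `Mf` -/
def PredOn (G : SimpleGraph V) (S A : Finset V) (M : Finset (Sym2 V)) : Prop :=
  IsMatchingOn G A M ∧ ∀ v ∈ A, v ∉ S → ∃ e ∈ M, v ∈ e

lemma PredOn.not_mOn {G : SimpleGraph V} {S A : Finset V} {M : Finset (Sym2 V)}
    (h : PredOn G S A M) {x : V} (hx : x ∉ A) : ¬ mOn M x := by
  rintro ⟨e, he, hxe⟩
  exact hx (h.1.2.1 e he x hxe)

lemma PredOn.nd {G : SimpleGraph V} {S A : Finset V} {M1 M2 : Finset (Sym2 V)}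
    (h1 : PredOn G S A M1) {A' : Finset V} (h2 : PredOn G S A' M2) :
    ∀ e ∈ M1 ∆ M2, ¬ e.IsDiag := by
  intro e he
  rw [Finset.mem_symmDiff] at he
  have : e ∈ G.edgeSet := by
    rcases he with ⟨h, _⟩ | ⟨h, _⟩
    · exact h1.1.1 e h
    · exact h2.1.1 e h
  exact SimpleGraph.not_isDiag_of_mem_edgeSet G this

/-- the key bookkeeping lemma: swapping along a closed vertex set -/
lemma swap_PredOn {G : SimpleGraph V} {S : Finset V} {M1 M2 E1 E2 : Finset V → Finset V} : True := trivial

lemma swap_PredOn' {G : SimpleGraph V} {S : Finset V} {M1 M2 : Finset (Sym2 V)}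
    {E1 E2 Q : Finset V} (hEQ : E1 ∪ E2 = Q)
    (h1 : PredOn G S (Finset.univ \ E1) M1) (h2 : PredOn G S (Finset.univ \ E2) M2)
    {W : Set V} (hW : WClosed (M1 ∆ M2) W) :
    PredOn G S (Finset.univ \ ((E1 \ Q.filter (· ∈ W)) ∪ (E2 ∩ Q.filter (· ∈ W))))
      (M1 ∆ swC (M1 ∆ M2) W) := by
  have hND := h1.nd h2
  set Fw := Q.filter (· ∈ W) with hFw
  set E1' := (E1 \ Fw) ∪ (E2 ∩ Fw) with hE1'
  set M1' := M1 ∆ swC (M1 ∆ M2) W with hM1'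
  -- vertex membership facts
  have hE1Q : E1 ⊆ Q := hEQ ▸ Finset.subset_union_left
  have hE2Q : E2 ⊆ Q := hEQ ▸ Finset.subset_union_right
  have hnot : ∀ x ∈ E1', ¬ mOn M1' x := by
    intro x hx
    rw [hE1', Finset.mem_union] at hx
    rcases hx with hx | hx
    · rw [Finset.mem_sdiff] at hx
      have hxW : x ∉ W := by
        intro hxW
        exact hx.2 (Finset.mem_filter.mpr ⟨hE1Q hx.1, hxW⟩)
      rw [hM1', swap_mOn_notin hND hW hxW]
      exact h1.not_mOn (by simp [hx.1])
    · rw [Finset.mem_inter, hFw, Finset.mem_filter] at hx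
      rw [hM1', swap_mOn_in hND hW hx.2.2]
      exact h2.not_mOn (by simp [hx.1])
  have hcov : ∀ v ∈ Finset.univ \ E1', v ∉ S → mOn M1' v := by
    intro v hv hvS
    rw [Finset.mem_sdiff] at hv
    by_cases hvW : v ∈ W
    · rw [hM1', swap_mOn_in hND hW hvW]
      have hvE2 : v ∉ E2 := by
        intro hvE2
        exact hv.2 (by
          rw [hE1', Finset.mem_union]
          right
          exact Finset.mem_inter.mpr ⟨hvE2, Finset.mem_filter.mpr ⟨hE2Q hvE2, hvW⟩⟩)
      exact h2.2 v (by simp [hvE2]) hvS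
    · rw [hM1', swap_mOn_notin hND hW hvW]
      have hvE1 : v ∉ E1 := by
        intro hvE1
        refine hv.2 ?_
        rw [hE1', Finset.mem_union]
        left
        rw [Finset.mem_sdiff]
        exact ⟨hvE1, fun hmem => hvW (Finset.mem_filter.mp hmem).2⟩
      exact h1.2 v (by simp [hvE1]) hvS
  refine ⟨⟨?_, ?_, ?_⟩, fun v hv hvS => hcov v hv hvS⟩
  · intro e he
    rw [hM1', mem_swap_iff] at he
    rcases he with ⟨h, _⟩ | ⟨h, _⟩
    · exact h1.1.1 e h
    · have := (mem_swC.mp h).1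
      rw [Finset.mem_symmDiff] at this
      rcases this with ⟨h', _⟩ | ⟨h', _⟩
      · exact h1.1.1 e h'
      · exact h2.1.1 e h'
  · intro e he v hve
    rw [Finset.mem_sdiff]
    refine ⟨Finset.mem_univ v, fun hvE1' => ?_⟩
    exact hnot v hvE1' ⟨e, he, hve⟩
  · exact swap_pairwise h1.1.2.2 h2.1.2.2 hND hW

/-- weight preservation -/
lemma swap_prod {R : Type*} [CommRing R] {M1 M2 : Finset (Sym2 V)} (w : Sym2 V → R)
    {C : Finset (Sym2 V)} (hC : C ⊆ M1 ∆ M2) :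
    (∏ e ∈ M1 ∆ C, w e) * ∏ e ∈ M2 ∆ C, w e = (∏ e ∈ M1, w e) * ∏ e ∈ M2, w e := by
  have exp : ∀ M C' : Finset (Sym2 V), (∏ e ∈ M ∆ C', w e) = (∏ e ∈ M \ C', w e) * ∏ e ∈ C' \ M, w e := by
    intro M C'
    have hset : M ∆ C' = (M \ C') ∪ (C' \ M) := by
      ext e; simp [Finset.mem_symmDiff]; try tauto
    rw [hset, Finset.prod_union disjoint_sdiff_sdiff]
  have dec : ∀ M C' : Finset (Sym2 V), (∏ e ∈ M, w e) = (∏ e ∈ M \ C', w e) * ∏ e ∈ M ∩ C', w e := by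
    intro M C'
    have hdisj : Disjoint (M \ C') (M ∩ C') := by
      rw [Finset.disjoint_left]
      intro e he he'
      exact (Finset.mem_sdiff.mp he).2 (Finset.mem_inter.mp he').2
    rw [← Finset.prod_union hdisj, Finset.sdiff_union_inter]
  have h1 : C \ M1 = M2 ∩ C := by
    ext e
    constructor
    · intro he
      rw [Finset.mem_sdiff] at he
      have := Finset.mem_symmDiff.mp (hC he.1)
      rw [Finset.mem_inter]
      tauto
    · intro he
      rw [Finset.mem_inter] at he
      have := Finset.mem_symmDiff.mp (hC he.2)
      rw [Finset.mem_sdiff]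
      tauto
  have h2 : C \ M2 = M1 ∩ C := by
    ext e
    constructor
    · intro he
      rw [Finset.mem_sdiff] at he
      have := Finset.mem_symmDiff.mp (hC he.1)
      rw [Finset.mem_inter]
      tauto
    · intro he
      rw [Finset.mem_inter] at he
      have := Finset.mem_symmDiff.mp (hC he.2)
      rw [Finset.mem_sdiff]
      tauto
  rw [exp M1 C, exp M2 C, h1, h2, dec M1 C, dec M2 C]
  rw [Finset.inter_comm M2 C, Finset.inter_comm M1 C]
  ring

/-! ### generic graph lemmas -/

/-- classical vertex degree -/
noncomputable def ndegH (H : SimpleGraph V) (v : V) : ℕ := (Finset.univ.filter (H.Adj v)).card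

lemma walk_support_closed {H : SimpleGraph V} {K : Set V}
    (hK : ∀ x ∈ K, ∀ y, H.Adj x y → y ∈ K) :
    ∀ {x z : V} (Q : H.Walk x z), x ∈ K → ∀ v ∈ Q.support, v ∈ K := by
  intro x z Q
  induction Q with
  | nil =>
    intro hx v hv
    rw [SimpleGraph.Walk.support_nil, List.mem_singleton] at hv
    subst hv; exact hx
  | cons h q ih =>
    intro hx v hv
    rw [SimpleGraph.Walk.support_cons, List.mem_cons] at hv
    rcases hv with rfl | hv
    · exact hx
    · exact ih (hK _ hx _ h) v hv

lemma two_neighbors_mem {H : SimpleGraph V} {v u1 u2 : V} (hdeg : ndegH H v ≤ 2)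
    (h1 : H.Adj v u1) (h2 : H.Adj v u2) (hne : u1 ≠ u2) :
    ∀ w, H.Adj v w → w = u1 ∨ w = u2 := by
  intro w hw
  have hsub : ({u1, u2} : Finset V) ⊆ Finset.univ.filter (H.Adj v) := by
    intro t ht
    rw [Finset.mem_insert, Finset.mem_singleton] at ht
    rcases ht with rfl | rfl <;> simp [h1, h2]
  have hcard : ({u1, u2} : Finset V).card = 2 := Finset.card_pair hne
  have heq : Finset.univ.filter (H.Adj v) = {u1, u2} :=
    (Finset.eq_of_subset_of_card_le hsub (by rw [hcard]; exact hdeg)).symm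
  have : w ∈ Finset.univ.filter (H.Adj v) := by simp [hw]
  rw [heq] at this
  simpa using this

lemma one_neighbor_mem {H : SimpleGraph V} {v u1 : V} (hdeg : ndegH H v ≤ 1)
    (h1 : H.Adj v u1) : ∀ w, H.Adj v w → w = u1 := by
  intro w hw
  have hsub : ({u1} : Finset V) ⊆ Finset.univ.filter (H.Adj v) := by
    intro t ht
    rw [Finset.mem_singleton] at ht
    subst ht; simp [h1]
  have heq : Finset.univ.filter (H.Adj v) = {u1} :=
    (Finset.eq_of_subset_of_card_le hsub (by unfold ndegH at hdeg; simpa using hdeg)).symm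
  have : w ∈ Finset.univ.filter (H.Adj v) := by simp [hw]
  rw [heq] at this
  simpa using this

lemma interior_two {H : SimpleGraph V} {x y : V} (P : H.Walk x y) (hP : P.IsPath)
    {v : V} (hv : v ∈ P.support) (hvx : v ≠ x) (hvy : v ≠ y) :
    ∃ u1 u2, u1 ≠ u2 ∧ H.Adj v u1 ∧ H.Adj v u2 ∧ u1 ∈ P.support ∧ u2 ∈ P.support := by
  set Q1 := P.takeUntil v hv with hQ1
  set Q2 := P.dropUntil v hv with hQ2
  obtain ⟨u2, hadj2, q2, hq2⟩ := SimpleGraph.Walk.exists_eq_cons_of_ne hvy Q2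
  obtain ⟨u1, hadj1, q1, hq1⟩ := SimpleGraph.Walk.exists_eq_cons_of_ne hvx Q1.reverse
  have hu1Q1 : u1 ∈ Q1.support := by
    have : u1 ∈ Q1.reverse.support := by
      rw [hq1, SimpleGraph.Walk.support_cons]
      exact List.mem_cons_of_mem _ (SimpleGraph.Walk.start_mem_support q1)
    rwa [SimpleGraph.Walk.support_reverse, List.mem_reverse] at this
  have hu2tail : u2 ∈ Q2.support.tail := by
    rw [hq2, SimpleGraph.Walk.support_cons]
    exact SimpleGraph.Walk.start_mem_support q2
  have hsplit : P.support = Q1.support ++ Q2.support.tail := by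
    rw [hQ1, hQ2, ← SimpleGraph.Walk.support_append, SimpleGraph.Walk.take_spec]
  have hnodup : (Q1.support ++ Q2.support.tail).Nodup := by
    rw [← hsplit]; exact hP.support_nodup
  have hdisj := List.disjoint_of_nodup_append hnodup
  refine ⟨u1, u2, fun h => hdisj hu1Q1 (h ▸ hu2tail), hadj1, hadj2, ?_, ?_⟩
  · exact SimpleGraph.Walk.support_takeUntil_subset P hv hu1Q1
  · exact SimpleGraph.Walk.support_dropUntil_subset P hv (List.mem_of_mem_tail hu2tail)

lemma three_leaves {H : SimpleGraph V} (hdeg : ∀ v, ndegH H v ≤ 2) {x y z : V}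
    (hxy : x ≠ y) (hxz : x ≠ z) (hyz : y ≠ z)
    (dx : Odd (ndegH H x)) (dy : Odd (ndegH H y)) (dz : Odd (ndegH H z))
    (rxy : H.Reachable x y) (rxz : H.Reachable x z) : False := by
  obtain ⟨P0⟩ := rxy
  set P := P0.bypass with hPdef
  have hP : P.IsPath := SimpleGraph.Walk.bypass_isPath P0
  have hdeg1 : ∀ v, Odd (ndegH H v) → ndegH H v = 1 := by
    intro v hodd
    obtain ⟨k, hk⟩ := hodd
    have := hdeg v
    omega
  have hclosed : ∀ v ∈ {t | t ∈ P.support}, ∀ w, H.Adj v w → w ∈ {t | t ∈ P.support} := by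
    intro v hv w hw
    simp only [Set.mem_setOf_eq] at hv ⊢
    by_cases hvx : v = x
    · subst hvx
      obtain ⟨u0, hadj0, q0, hq0⟩ := SimpleGraph.Walk.exists_eq_cons_of_ne hxy P
      have := one_neighbor_mem (by rw [hdeg1 v dx]) hadj0 w hw
      subst this
      rw [hq0, SimpleGraph.Walk.support_cons]
      exact List.mem_cons_of_mem _ (SimpleGraph.Walk.start_mem_support q0)
    · by_cases hvy : v = y
      · subst hvy
        obtain ⟨u0, hadj0, q0, hq0⟩ :=
          SimpleGraph.Walk.exists_eq_cons_of_ne (Ne.symm hxy) P.reverse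
        have heq := one_neighbor_mem (by rw [hdeg1 v dy]) hadj0 w hw
        have hmem : u0 ∈ P.reverse.support := by
          rw [hq0, SimpleGraph.Walk.support_cons]
          exact List.mem_cons_of_mem _ (SimpleGraph.Walk.start_mem_support q0)
        rw [SimpleGraph.Walk.support_reverse, List.mem_reverse] at hmem
        rw [heq]
        exact hmem
      · obtain ⟨u1, u2, hne, h1, h2, hs1, hs2⟩ := interior_two P hP hv hvx hvy
        rcases two_neighbors_mem (hdeg v) h1 h2 hne w hw with rfl | rfl
        · exact hs1
        · exact hs2
  obtain ⟨Q0⟩ := rxz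
  have hzP : z ∈ P.support :=
    walk_support_closed hclosed Q0 (SimpleGraph.Walk.start_mem_support P) z
      (SimpleGraph.Walk.end_mem_support Q0)
  obtain ⟨u1, u2, hne, h1, h2, _, _⟩ := interior_two P hP hzP (Ne.symm hxz) (Ne.symm hyz)
  have hsub : ({u1, u2} : Finset V) ⊆ Finset.univ.filter (H.Adj z) := by
    intro t ht
    rw [Finset.mem_insert, Finset.mem_singleton] at ht
    rcases ht with rfl | rfl <;> simp [h1, h2]
  have : 2 ≤ ndegH H z := by
    rw [← Finset.card_pair hne]
    exact Finset.card_le_card hsub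
  rw [hdeg1 z dz] at this
  omega

lemma exists_other_odd {H : SimpleGraph V} {b : V} (hb : Odd (ndegH H b)) :
    ∃ w, w ≠ b ∧ H.Reachable b w ∧ Odd (ndegH H w) := by
  set Hb : SimpleGraph V :=
    { Adj := fun x y => H.Adj x y ∧ H.Reachable b x ∧ H.Reachable b y
      symm := ⟨by rintro x y ⟨h1, h2, h3⟩; exact ⟨h1.symm, h3, h2⟩⟩
      loopless := ⟨fun x h => H.loopless.irrefl x h.1⟩ } with hHb
  letI : DecidableRel Hb.Adj := Classical.decRel _
  have hfilter : ∀ v, H.Reachable b v →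
      Finset.univ.filter (Hb.Adj v) = Finset.univ.filter (H.Adj v) := by
    intro v hv
    ext t
    simp only [Finset.mem_filter, Finset.mem_univ, true_and, hHb]
    exact ⟨fun h => h.1, fun h => ⟨h, hv, hv.trans h.reachable⟩⟩
  have hdegeq : ∀ v, H.Reachable b v → Hb.degree v = ndegH H v := by
    intro v hv
    unfold ndegH
    rw [← hfilter v hv]
    have hnb : Hb.neighborFinset v = Finset.univ.filter (Hb.Adj v) := by
      ext t
      simp [SimpleGraph.mem_neighborFinset]
    rw [show Hb.degree v = (Hb.neighborFinset v).card from rfl, hnb]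
  have hbodd : Odd (Hb.degree b) := by
    rw [hdegeq b (SimpleGraph.Reachable.refl b)]; exact hb
  have := SimpleGraph.odd_card_odd_degree_vertices_ne Hb b hbodd
  have hne0 : (Finset.univ.filter fun w => w ≠ b ∧ Odd (Hb.degree w)).card ≠ 0 := by
    intro h
    rw [h] at this
    exact (by decide : ¬ Odd 0) this
  obtain ⟨w, hw⟩ := Finset.card_ne_zero.mp hne0 |>.exists_mem
  rw [Finset.mem_filter] at hw
  obtain ⟨-, hwb, hwodd⟩ := hw
  have hpos : 0 < Hb.degree w := by
    obtain ⟨k, hk⟩ := hwodd; omega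
  obtain ⟨t, ht⟩ := (Hb.degree_pos_iff_exists_adj w).mp hpos
  have hreach : H.Reachable b w := ht.2.1
  refine ⟨w, hwb, hreach, ?_⟩
  rwa [hdegeq w hreach] at hwodd

/-! ### degrees in the symmetric difference graph -/

section Deg

variable {G : SimpleGraph V} {M1 M2 : Finset (Sym2 V)} {v : V}

lemma edge_other {M : Finset (Sym2 V)} (hg : ∀ e ∈ M, e ∈ G.edgeSet)
    {e : Sym2 V} {v : V} (he : e ∈ M) (hve : v ∈ e) : ∃ y, y ≠ v ∧ s(v, y) = e := by
  refine ⟨Sym2.Mem.other' hve, ?_, Sym2.other_spec' hve⟩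
  intro h
  have hnd : ¬ e.IsDiag := G.not_isDiag_of_mem_edgeSet (hg e he)
  rw [← Sym2.other_spec' hve, h] at hnd
  exact hnd (Sym2.diag_isDiag v)

lemma sym2_eq_snd {x y1 y2 : V} (h : s(x, y1) = s(x, y2)) (hx1 : x ≠ y1) : y1 = y2 := by
  rw [Sym2.eq_iff] at h
  rcases h with ⟨-, h⟩ | ⟨h1, h2⟩
  · exact h
  · exact absurd h2.symm hx1

/-- the filter defining `ndegH` of the graph `Hgr D` -/

lemma hgr_adj' {D : Finset (Sym2 V)} {x y : V} : (Hgr D).Adj x y ↔ x ≠ y ∧ s(x, y) ∈ D := Iff.rfl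

variable (hm1 : ∀ e ∈ M1, ∀ f ∈ M1, e ≠ f → ∀ t : V, t ∈ e → t ∉ f)
  (hm2 : ∀ e ∈ M2, ∀ f ∈ M2, e ≠ f → ∀ t : V, t ∈ e → t ∉ f)
  (hg1 : ∀ e ∈ M1, e ∈ G.edgeSet) (hg2 : ∀ e ∈ M2, e ∈ G.edgeSet)

include hm1 hm2 hg1 hg2

lemma ndeg_D_one (h1 : mOn M1 v) (h2 : ¬ mOn M2 v) :
    ndegH (Hgr (M1 ∆ M2)) v = 1 := by
  obtain ⟨e, he, hve⟩ := h1
  obtain ⟨y1, hy1v, hy1e⟩ := edge_other hg1 he hve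
  have heD : e ∈ M1 ∆ M2 := by
    rw [Finset.mem_symmDiff]
    left
    exact ⟨he, fun h => h2 ⟨e, h, hve⟩⟩
  have : Finset.univ.filter ((Hgr (M1 ∆ M2)).Adj v) = {y1} := by
    ext t
    simp only [Finset.mem_filter, Finset.mem_univ, true_and, Finset.mem_singleton, hgr_adj']
    constructor
    · rintro ⟨hvt, htD⟩
      rw [Finset.mem_symmDiff] at htD
      rcases htD with ⟨ht1, -⟩ | ⟨ht2, -⟩
      · have := matchUnique hm1 ht1 he (Sym2.mem_mk_left v t) hve
        rw [← hy1e] at this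
        exact sym2_eq_snd this hvt
      · exact absurd ⟨s(v, t), ht2, Sym2.mem_mk_left v t⟩ h2
    · rintro rfl
      exact ⟨hy1v.symm, by rwa [hy1e]⟩
  unfold ndegH
  rw [this, Finset.card_singleton]

lemma ndeg_D_even_both (h1 : mOn M1 v) (h2 : mOn M2 v) :
    ¬ Odd (ndegH (Hgr (M1 ∆ M2)) v) := by
  obtain ⟨e1, he1, hve1⟩ := h1
  obtain ⟨e2, he2, hve2⟩ := h2
  obtain ⟨y1, hy1v, hy1e⟩ := edge_other hg1 he1 hve1
  obtain ⟨y2, hy2v, hy2e⟩ := edge_other hg2 he2 hve2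
  by_cases h12 : e1 = e2
  · have : Finset.univ.filter ((Hgr (M1 ∆ M2)).Adj v) = ∅ := by
      ext t
      simp only [Finset.mem_filter, Finset.mem_univ, true_and, Finset.notMem_empty,
        iff_false, hgr_adj', not_and]
      intro hvt htD
      rw [Finset.mem_symmDiff] at htD
      rcases htD with ⟨ht1, ht2⟩ | ⟨ht2, ht1⟩
      · have heq := matchUnique hm1 ht1 he1 (Sym2.mem_mk_left v t) hve1
        rw [heq, h12] at ht2
        exact ht2 he2
      · have heq := matchUnique hm2 ht2 he2 (Sym2.mem_mk_left v t) hve2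
        rw [heq, ← h12] at ht1
        exact ht1 he1
    unfold ndegH
    rw [this]
    simp
  · have he1D : e1 ∈ M1 ∆ M2 := by
      rw [Finset.mem_symmDiff]
      left
      refine ⟨he1, fun h => h12 (matchUnique hm2 h he2 hve1 hve2)⟩
    have he2D : e2 ∈ M1 ∆ M2 := by
      rw [Finset.mem_symmDiff]
      right
      refine ⟨he2, fun h => h12 (matchUnique hm1 h he1 hve2 hve1).symm⟩
    have hy12 : y1 ≠ y2 := by
      intro h
      exact h12 (by rw [← hy1e, ← hy2e, h])
    have : Finset.univ.filter ((Hgr (M1 ∆ M2)).Adj v) = {y1, y2} := by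
      ext t
      simp only [Finset.mem_filter, Finset.mem_univ, true_and, Finset.mem_insert,
        Finset.mem_singleton, hgr_adj']
      constructor
      · rintro ⟨hvt, htD⟩
        rw [Finset.mem_symmDiff] at htD
        rcases htD with ⟨ht1, -⟩ | ⟨ht2, -⟩
        · have := matchUnique hm1 ht1 he1 (Sym2.mem_mk_left v t) hve1
          rw [← hy1e] at this
          exact Or.inl (sym2_eq_snd this hvt)
        · have := matchUnique hm2 ht2 he2 (Sym2.mem_mk_left v t) hve2
          rw [← hy2e] at this
          exact Or.inr (sym2_eq_snd this hvt)
      · rintro (rfl | rfl)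
        · exact ⟨hy1v.symm, by rwa [hy1e]⟩
        · exact ⟨hy2v.symm, by rwa [hy2e]⟩
    unfold ndegH
    rw [this, Finset.card_pair hy12]
    decide
    
lemma ndeg_D_zero' (h1 : ¬ mOn M1 v) (h2 : ¬ mOn M2 v) :
    ndegH (Hgr (M1 ∆ M2)) v = 0 := by
  have : Finset.univ.filter ((Hgr (M1 ∆ M2)).Adj v) = ∅ := by
    ext t
    simp only [Finset.mem_filter, Finset.mem_univ, true_and, Finset.notMem_empty,
      iff_false, hgr_adj', not_and]
    intro hvt htD
    rw [Finset.mem_symmDiff] at htD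
    rcases htD with ⟨ht1, -⟩ | ⟨ht2, -⟩
    · exact h1 ⟨s(v, t), ht1, Sym2.mem_mk_left v t⟩
    · exact h2 ⟨s(v, t), ht2, Sym2.mem_mk_left v t⟩
  unfold ndegH
  rw [this]
  simp

lemma ndeg_D_le_two : ∀ u : V, ndegH (Hgr (M1 ∆ M2)) u ≤ 2 := by
  intro u
  by_cases h1 : mOn M1 u <;> by_cases h2 : mOn M2 u
  · by_contra hgt
    push_neg at hgt
    have heven := ndeg_D_even_both hm1 hm2 hg1 hg2 h1 h2
    -- even + could still exceed 2? we need the explicit filter computation instead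
    -- fall back: the filter is contained in a two-element set
    obtain ⟨e1, he1, hue1⟩ := h1
    obtain ⟨e2, he2, hue2⟩ := h2
    obtain ⟨y1, hy1v, hy1e⟩ := edge_other hg1 he1 hue1
    obtain ⟨y2, hy2v, hy2e⟩ := edge_other hg2 he2 hue2
    have hsub : Finset.univ.filter ((Hgr (M1 ∆ M2)).Adj u) ⊆ {y1, y2} := by
      intro t ht
      simp only [Finset.mem_filter, Finset.mem_univ, true_and, hgr_adj'] at ht
      obtain ⟨hvt, htD⟩ := ht
      rw [Finset.mem_symmDiff] at htD
      simp only [Finset.mem_insert, Finset.mem_singleton]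
      rcases htD with ⟨ht1, -⟩ | ⟨ht2, -⟩
      · have := matchUnique hm1 ht1 he1 (Sym2.mem_mk_left u t) hue1
        rw [← hy1e] at this
        exact Or.inl (sym2_eq_snd this hvt)
      · have := matchUnique hm2 ht2 he2 (Sym2.mem_mk_left u t) hue2
        rw [← hy2e] at this
        exact Or.inr (sym2_eq_snd this hvt)
    have := Finset.card_le_card hsub
    have h2' := Finset.card_insert_le y1 ({y2} : Finset V)
    unfold ndegH at hgt
    simp only [Finset.card_singleton] at h2'
    omega
  · rw [ndeg_D_one hm1 hm2 hg1 hg2 h1 h2]; omega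
  · rw [symmDiff_comm]
    rw [ndeg_D_one hm2 hm1 hg2 hg1 h2 h1]; omega
  · rw [ndeg_D_zero' hm1 hm2 hg1 hg2 h1 h2]; omega

end Deg

/-! ### path extraction and the forbidden patterns -/

lemma hgr_le {G : SimpleGraph V} {D : Finset (Sym2 V)} (hDG : ∀ e ∈ D, e ∈ G.edgeSet) :
    Hgr D ≤ G := fun {x y} h => G.mem_edgeSet.mp (hDG _ h.2)

lemma reach_closed {H : SimpleGraph V} (x : V) :
    ∀ v ∈ {t | H.Reachable x t}, ∀ w, H.Adj v w → w ∈ {t | H.Reachable x t} :=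
  fun v hv w hw => Set.mem_setOf_eq ▸ (Set.mem_setOf_eq ▸ hv).trans hw.reachable

lemma reach_G_path {G : SimpleGraph V} {D : Finset (Sym2 V)} (hDG : ∀ e ∈ D, e ∈ G.edgeSet)
    {x z : V} (hxz : (Hgr D).Reachable x z) :
    ∃ P : G.Walk x z, P.IsPath ∧ ∀ v ∈ P.support, (Hgr D).Reachable x v := by
  obtain ⟨Q0⟩ := hxz
  set Q := Q0.bypass with hQdef
  have hQ : Q.IsPath := SimpleGraph.Walk.bypass_isPath Q0
  have hQsup : ∀ v ∈ Q.support, (Hgr D).Reachable x v :=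
    walk_support_closed (reach_closed x) Q (SimpleGraph.Reachable.refl x)
  set f := SimpleGraph.Hom.ofLE (hgr_le hDG) with hf
  have hfid : ∀ t, f t = t := fun t => rfl
  have hinj : Function.Injective f := fun s t hst => by rwa [hfid, hfid] at hst
  refine ⟨Q.map f, SimpleGraph.Walk.map_isPath_of_injective hinj hQ, ?_⟩
  intro v hv
  rw [SimpleGraph.Walk.support_map] at hv
  obtain ⟨u, hu, huv⟩ := List.mem_map.mp hv
  rw [hfid] at huv
  exact huv ▸ hQsup u hu

lemma comp_walk_disjoint {G : SimpleGraph V} {D : Finset (Sym2 V)} {x y x' y' : V}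
    (P : G.Walk x y) (Q : G.Walk x' y')
    (hP : ∀ v ∈ P.support, (Hgr D).Reachable x v) (hQ : ∀ v ∈ Q.support, (Hgr D).Reachable x' v)
    (hxx : ¬ (Hgr D).Reachable x x') : WalkDisjoint P Q :=
  fun z hzP hzQ => hxx ((hP z hzP).trans (hQ z hzQ).symm)

lemma face_facts {G : SimpleGraph V} {L : List V} {a b c d : V}
    (hface : FaceConfig G L a b c d) :
    (a ≠ b ∧ a ≠ c ∧ a ≠ d ∧ b ≠ c ∧ b ≠ d ∧ c ≠ d) ∧
      ¬ ∃ (P : G.Walk a c) (Q : G.Walk b d), P.IsPath ∧ Q.IsPath ∧ WalkDisjoint P Q := by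
  obtain ⟨L', hrot, i, j, k, l, hij, hjk, hkl, hia, hjb, hkc, hld⟩ := hface.cyclic
  have hnd : L'.Nodup := hrot.nodup_iff.mp hface.nodup
  have hinj : ∀ {p q : Fin L'.length}, p < q → L'.get p ≠ L'.get q := by
    intro p q hpq h
    exact absurd (List.Nodup.get_inj_iff hnd |>.mp h) (Fin.ne_of_lt hpq)
  have nc := hface.noncrossing L' hrot i j k l hij hjk hkl
  rw [hia, hjb, hkc, hld] at nc
  subst hia hjb hkc hld
  exact ⟨⟨hinj hij, hinj (hij.trans hjk), hinj ((hij.trans hjk).trans hkl),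
    hinj hjk, hinj (hjk.trans hkl), hinj hkl⟩, nc⟩

section Forbidden

variable {G : SimpleGraph V} {S : Finset V} {L : List V} {a b c d : V}
  {M1 M2 E1 E2 : Finset V → Finset V}

/-- collection of degree facts for a Kuo pair -/
lemma deg_pack {G : SimpleGraph V} {S : Finset V} {a b c d : V}
    {M1 M2 : Finset (Sym2 V)} {E1 E2 : Finset V}
    (hEQ : E1 ∪ E2 = {a, b, c, d}) (hE12 : Disjoint E1 E2)
    (hdisjS : Disjoint S ({a, b, c, d} : Finset V))
    (h1 : PredOn G S (Finset.univ \ E1) M1) (h2 : PredOn G S (Finset.univ \ E2) M2) :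
    (∀ x ∈ ({a, b, c, d} : Finset V), ndegH (Hgr (M1 ∆ M2)) x = 1) ∧
    (∀ v, Odd (ndegH (Hgr (M1 ∆ M2)) v) → v ∈ S ∨ v ∈ ({a, b, c, d} : Finset V)) ∧
    (∀ u, ndegH (Hgr (M1 ∆ M2)) u ≤ 2) := by
  have hm1 := h1.1.2.2
  have hm2 := h2.1.2.2
  have hg1 := h1.1.1
  have hg2 := h2.1.1
  refine ⟨?_, ?_, ndeg_D_le_two hm1 hm2 hg1 hg2⟩
  · intro x hx
    have hxS : x ∉ S := fun hxS => (Finset.disjoint_left.mp hdisjS) hxS hx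
    rw [← hEQ, Finset.mem_union] at hx
    rcases hx with hx1 | hx2
    · have hx2 : x ∉ E2 := Finset.disjoint_left.mp hE12 hx1
      have hmon2 : mOn M2 x := h2.2 x (by simp [hx2]) hxS
      have hmon1 : ¬ mOn M1 x := h1.not_mOn (by simp [hx1])
      rw [symmDiff_comm]
      exact ndeg_D_one hm2 hm1 hg2 hg1 hmon2 hmon1
    · have hx1 : x ∉ E1 := Finset.disjoint_right.mp hE12 hx2
      have hmon1 : mOn M1 x := h1.2 x (by simp [hx1]) hxS
      have hmon2 : ¬ mOn M2 x := h2.not_mOn (by simp [hx2])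
      exact ndeg_D_one hm1 hm2 hg1 hg2 hmon1 hmon2
  · intro v hv
    by_contra hcon
    push_neg at hcon
    have hv1 : v ∉ E1 := fun h => hcon.2 (hEQ ▸ Finset.mem_union_left E2 h)
    have hv2 : v ∉ E2 := fun h => hcon.2 (hEQ ▸ Finset.mem_union_right E1 h)
    have hmon1 : mOn M1 v := h1.2 v (by simp [hv1]) hcon.1
    have hmon2 : mOn M2 v := h2.2 v (by simp [hv2]) hcon.1
    exact ndeg_D_even_both hm1 hm2 hg1 hg2 hmon1 hmon2 hv

lemma hDG_of {G : SimpleGraph V} {S : Finset V} {A1 A2 : Finset V}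
    {M1 M2 : Finset (Sym2 V)}
    (h1 : PredOn G S A1 M1) (h2 : PredOn G S A2 M2) :
    ∀ e ∈ M1 ∆ M2, e ∈ G.edgeSet := by
  intro e he
  rw [Finset.mem_symmDiff] at he
  rcases he with ⟨h, _⟩ | ⟨h, _⟩
  · exact h1.1.1 e h
  · exact h2.1.1 e h

/-- `a` and `c` are never in the same component of the symmetric difference -/
lemma no_ac {G : SimpleGraph V} {S : Finset V} {L : List V} {a b c d : V}
    {M1 M2 : Finset (Sym2 V)} {E1 E2 : Finset V}
    (hface : FaceConfig G L a b c d)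
    (hdisjS : Disjoint S ({a, b, c, d} : Finset V))
    (hsepAC : Separated G S a b c d)
    (hEQ : E1 ∪ E2 = {a, b, c, d}) (hE12 : Disjoint E1 E2)
    (h1 : PredOn G S (Finset.univ \ E1) M1) (h2 : PredOn G S (Finset.univ \ E2) M2) :
    ¬ (Hgr (M1 ∆ M2)).Reachable a c := by
  intro hrac
  obtain ⟨⟨hab, hac, had, hbc, hbd, hcd⟩, hnc⟩ := face_facts hface
  obtain ⟨hdeg1, hodd, hle2⟩ := deg_pack hEQ hE12 hdisjS h1 h2
  have hDG := hDG_of h1 h2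
  have da := hdeg1 a (by simp)
  have db := hdeg1 b (by simp)
  have dc := hdeg1 c (by simp)
  have dd := hdeg1 d (by simp)
  have oa : Odd (ndegH (Hgr (M1 ∆ M2)) a) := by rw [da]; decide
  have ob : Odd (ndegH (Hgr (M1 ∆ M2)) b) := by rw [db]; decide
  have oc : Odd (ndegH (Hgr (M1 ∆ M2)) c) := by rw [dc]; decide
  have od : Odd (ndegH (Hgr (M1 ∆ M2)) d) := by rw [dd]; decide
  have hnab : ¬ (Hgr (M1 ∆ M2)).Reachable a b := fun h =>
    three_leaves hle2 hab hac hbc oa ob oc h hrac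
  have hnad : ¬ (Hgr (M1 ∆ M2)).Reachable a d := fun h =>
    three_leaves hle2 hac had hcd oa oc od hrac h
  obtain ⟨P1, hP1, hP1sup⟩ := reach_G_path hDG hrac
  by_cases hbdreach : (Hgr (M1 ∆ M2)).Reachable b d
  · obtain ⟨Q, hQ, hQsup⟩ := reach_G_path hDG hbdreach
    exact hnc ⟨P1, Q, hP1, hQ, comp_walk_disjoint P1 Q hP1sup hQsup hnab⟩
  · -- both `b` and `d` connect to free vertices
    obtain ⟨s, hsb, hrbs, hsodd⟩ := exists_other_odd (by rw [db]; decide)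
    obtain ⟨t, htd, hrdt, htodd⟩ := exists_other_odd (by rw [dd]; decide)
    have hsS : s ∈ S := by
      rcases hodd s hsodd with h | h
      · exact h
      · exfalso
        simp only [Finset.mem_insert, Finset.mem_singleton] at h
        rcases h with rfl | rfl | rfl | rfl
        · exact hnab (hrbs.symm)
        · exact hsb rfl
        · exact hnab (hrac.trans hrbs.symm)
        · exact hbdreach hrbs
    have htS : t ∈ S := by
      rcases hodd t htodd with h | h
      · exact h
      · exfalso
        simp only [Finset.mem_insert, Finset.mem_singleton] at h
        rcases h with rfl | rfl | rfl | rfl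
        · exact hnad (hrdt.symm)
        · exact hbdreach hrdt.symm
        · exact hnad (hrac.trans hrdt.symm)
        · exact htd rfl
    have hst : s ≠ t := fun h => hbdreach (hrbs.trans (h ▸ hrdt).symm)
    obtain ⟨P2, hP2, hP2sup⟩ := reach_G_path hDG hrbs
    obtain ⟨P3, hP3, hP3sup⟩ := reach_G_path hDG hrdt
    exact hsepAC ⟨s, t, P1, P2, P3, hsS, htS, hst, hP1, hP2, hP3,
      comp_walk_disjoint P1 P2 hP1sup hP2sup hnab,
      comp_walk_disjoint P1 P3 hP1sup hP3sup hnad,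
      comp_walk_disjoint P2 P3 hP2sup hP3sup hbdreach⟩

/-- `b` and `d` are never in the same component of the symmetric difference -/
lemma no_bd {G : SimpleGraph V} {S : Finset V} {L : List V} {a b c d : V}
    {M1 M2 : Finset (Sym2 V)} {E1 E2 : Finset V}
    (hface : FaceConfig G L a b c d)
    (hdisjS : Disjoint S ({a, b, c, d} : Finset V))
    (hsepBD : Separated G S b c d a)
    (hEQ : E1 ∪ E2 = {a, b, c, d}) (hE12 : Disjoint E1 E2)
    (h1 : PredOn G S (Finset.univ \ E1) M1) (h2 : PredOn G S (Finset.univ \ E2) M2) :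
    ¬ (Hgr (M1 ∆ M2)).Reachable b d := by
  intro hrbd
  obtain ⟨⟨hab, hac, had, hbc, hbd, hcd⟩, hnc⟩ := face_facts hface
  obtain ⟨hdeg1, hodd, hle2⟩ := deg_pack hEQ hE12 hdisjS h1 h2
  have hDG := hDG_of h1 h2
  have da := hdeg1 a (by simp)
  have db := hdeg1 b (by simp)
  have dc := hdeg1 c (by simp)
  have dd := hdeg1 d (by simp)
  have oa : Odd (ndegH (Hgr (M1 ∆ M2)) a) := by rw [da]; decide
  have ob : Odd (ndegH (Hgr (M1 ∆ M2)) b) := by rw [db]; decide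
  have oc : Odd (ndegH (Hgr (M1 ∆ M2)) c) := by rw [dc]; decide
  have od : Odd (ndegH (Hgr (M1 ∆ M2)) d) := by rw [dd]; decide
  have hnbc : ¬ (Hgr (M1 ∆ M2)).Reachable b c := fun h =>
    three_leaves hle2 hbd hbc (Ne.symm hcd) ob od oc hrbd h
  have hnba : ¬ (Hgr (M1 ∆ M2)).Reachable b a := fun h =>
    three_leaves hle2 hbd (Ne.symm hab) (Ne.symm had) ob od oa hrbd h
  obtain ⟨P1, hP1, hP1sup⟩ := reach_G_path hDG hrbd
  by_cases hacreach : (Hgr (M1 ∆ M2)).Reachable a c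
  · obtain ⟨Q, hQ, hQsup⟩ := reach_G_path hDG hacreach
    exact hnc ⟨Q, P1, hQ, hP1, comp_walk_disjoint Q P1 hQsup hP1sup (fun h => hnba h.symm)⟩
  · obtain ⟨s, hsc, hrcs, hsodd⟩ := exists_other_odd (by rw [dc]; decide)
    obtain ⟨t, hta, hrat, htodd⟩ := exists_other_odd (by rw [da]; decide)
    have hsS : s ∈ S := by
      rcases hodd s hsodd with h | h
      · exact h
      · exfalso
        simp only [Finset.mem_insert, Finset.mem_singleton] at h
        rcases h with rfl | rfl | rfl | rfl
        · exact hacreach hrcs.symm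
        · exact hnbc hrcs.symm
        · exact hsc rfl
        · exact hnbc (hrbd.trans hrcs.symm)
    have htS : t ∈ S := by
      rcases hodd t htodd with h | h
      · exact h
      · exfalso
        simp only [Finset.mem_insert, Finset.mem_singleton] at h
        rcases h with rfl | rfl | rfl | rfl
        · exact hta rfl
        · exact hnba hrat.symm
        · exact hacreach hrat
        · exact hnba (hrbd.trans hrat.symm)
    have hst : s ≠ t := by
      intro h
      rw [h] at hrcs
      exact hacreach (hrat.trans hrcs.symm)
    obtain ⟨P2, hP2, hP2sup⟩ := reach_G_path hDG hrcs
    obtain ⟨P3, hP3, hP3sup⟩ := reach_G_path hDG hrat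
    exact hsepBD ⟨s, t, P1, P2, P3, hsS, htS, hst, hP1, hP2, hP3,
      comp_walk_disjoint P1 P2 hP1sup hP2sup hnbc,
      comp_walk_disjoint P1 P3 hP1sup hP3sup hnba,
      comp_walk_disjoint P2 P3 hP2sup hP3sup (fun h => hacreach h.symm)⟩

end Forbidden

/-! ### the Kuo swap -/

lemma WClosed_reach (D : Finset (Sym2 V)) (x : V) :
    WClosed D {v | (Hgr D).Reachable x v} :=
  fun u hu y hy => (Set.mem_setOf_eq ▸ hu).trans hy.reachable

lemma WClosed_union {D : Finset (Sym2 V)} {W W' : Set V}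
    (h : WClosed D W) (h' : WClosed D W') : WClosed D (W ∪ W') := by
  rintro u (hu | hu) y hy
  · exact Or.inl (h u hu y hy)
  · exact Or.inr (h' u hu y hy)

noncomputable def kuoSwap (a b c d : V) (M1 M2 : Finset (Sym2 V)) :
    (Finset (Sym2 V) × Finset (Sym2 V)) × Bool :=
  if (Hgr (M1 ∆ M2)).Reachable a b then
    ((M1 ∆ swC (M1 ∆ M2) {v | (Hgr (M1 ∆ M2)).Reachable a v},
      M2 ∆ swC (M1 ∆ M2) {v | (Hgr (M1 ∆ M2)).Reachable a v}), true)
  else if (Hgr (M1 ∆ M2)).Reachable a d then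
    ((M1 ∆ swC (M1 ∆ M2) {v | (Hgr (M1 ∆ M2)).Reachable a v},
      M2 ∆ swC (M1 ∆ M2) {v | (Hgr (M1 ∆ M2)).Reachable a v}), false)
  else if (Hgr (M1 ∆ M2)).Reachable b c then
    ((M2 ∆ swC (M1 ∆ M2) {v | (Hgr (M1 ∆ M2)).Reachable b v},
      M1 ∆ swC (M1 ∆ M2) {v | (Hgr (M1 ∆ M2)).Reachable b v}), false)
  else if (Hgr (M1 ∆ M2)).Reachable c d then
    ((M2 ∆ swC (M1 ∆ M2) {v | (Hgr (M1 ∆ M2)).Reachable c v},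
      M1 ∆ swC (M1 ∆ M2) {v | (Hgr (M1 ∆ M2)).Reachable c v}), true)
  else
    ((M1 ∆ swC (M1 ∆ M2) ({v | (Hgr (M1 ∆ M2)).Reachable a v} ∪ {v | (Hgr (M1 ∆ M2)).Reachable b v}),
      M2 ∆ swC (M1 ∆ M2) ({v | (Hgr (M1 ∆ M2)).Reachable a v} ∪ {v | (Hgr (M1 ∆ M2)).Reachable b v})), true)

lemma symmDiff_swap_eq' (M1 M2 C : Finset (Sym2 V)) : (M2 ∆ C) ∆ (M1 ∆ C) = M1 ∆ M2 := by
  ext e; simp [Finset.mem_symmDiff]; try tauto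

lemma kuoSwap_invol (a b c d : V) (M1 M2 : Finset (Sym2 V)) :
    kuoSwap a b c d (kuoSwap a b c d M1 M2).1.1 (kuoSwap a b c d M1 M2).1.2 =
      ((M1, M2), (kuoSwap a b c d M1 M2).2) := by
  by_cases h1 : (Hgr (M1 ∆ M2)).Reachable a b
  · have hr : kuoSwap a b c d M1 M2 =
        ((M1 ∆ swC (M1 ∆ M2) {v | (Hgr (M1 ∆ M2)).Reachable a v},
          M2 ∆ swC (M1 ∆ M2) {v | (Hgr (M1 ∆ M2)).Reachable a v}), true) := by
      rw [kuoSwap, if_pos h1]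
    rw [hr]
    rw [kuoSwap, symmDiff_swap_eq, if_pos h1, symmDiff_symmDiff_cancel',
      symmDiff_symmDiff_cancel']
  · by_cases h2 : (Hgr (M1 ∆ M2)).Reachable a d
    · have hr : kuoSwap a b c d M1 M2 =
          ((M1 ∆ swC (M1 ∆ M2) {v | (Hgr (M1 ∆ M2)).Reachable a v},
            M2 ∆ swC (M1 ∆ M2) {v | (Hgr (M1 ∆ M2)).Reachable a v}), false) := by
        rw [kuoSwap, if_neg h1, if_pos h2]
      rw [hr]
      rw [kuoSwap, symmDiff_swap_eq, if_neg h1, if_pos h2, symmDiff_symmDiff_cancel',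
        symmDiff_symmDiff_cancel']
    · by_cases h3 : (Hgr (M1 ∆ M2)).Reachable b c
      · have hr : kuoSwap a b c d M1 M2 =
            ((M2 ∆ swC (M1 ∆ M2) {v | (Hgr (M1 ∆ M2)).Reachable b v},
              M1 ∆ swC (M1 ∆ M2) {v | (Hgr (M1 ∆ M2)).Reachable b v}), false) := by
          rw [kuoSwap, if_neg h1, if_neg h2, if_pos h3]
        rw [hr]
        rw [kuoSwap, symmDiff_swap_eq', if_neg h1, if_neg h2, if_pos h3,
          symmDiff_symmDiff_cancel', symmDiff_symmDiff_cancel']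
      · by_cases h4 : (Hgr (M1 ∆ M2)).Reachable c d
        · have hr : kuoSwap a b c d M1 M2 =
              ((M2 ∆ swC (M1 ∆ M2) {v | (Hgr (M1 ∆ M2)).Reachable c v},
                M1 ∆ swC (M1 ∆ M2) {v | (Hgr (M1 ∆ M2)).Reachable c v}), true) := by
            rw [kuoSwap, if_neg h1, if_neg h2, if_neg h3, if_pos h4]
          rw [hr]
          rw [kuoSwap, symmDiff_swap_eq', if_neg h1, if_neg h2, if_neg h3, if_pos h4,
            symmDiff_symmDiff_cancel', symmDiff_symmDiff_cancel']
        · have hr : kuoSwap a b c d M1 M2 =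
              ((M1 ∆ swC (M1 ∆ M2) ({v | (Hgr (M1 ∆ M2)).Reachable a v} ∪
                  {v | (Hgr (M1 ∆ M2)).Reachable b v}),
                M2 ∆ swC (M1 ∆ M2) ({v | (Hgr (M1 ∆ M2)).Reachable a v} ∪
                  {v | (Hgr (M1 ∆ M2)).Reachable b v})), true) := by
            rw [kuoSwap, if_neg h1, if_neg h2, if_neg h3, if_neg h4]
          rw [hr]
          rw [kuoSwap, symmDiff_swap_eq, if_neg h1, if_neg h2, if_neg h3, if_neg h4,
            symmDiff_symmDiff_cancel', symmDiff_symmDiff_cancel']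

/-- weight preservation for the swap -/
lemma kuoSwap_weight {R : Type*} [CommRing R] (w : Sym2 V → R) (a b c d : V)
    (M1 M2 : Finset (Sym2 V)) :
    (∏ e ∈ (kuoSwap a b c d M1 M2).1.1, w e) * ∏ e ∈ (kuoSwap a b c d M1 M2).1.2, w e =
      (∏ e ∈ M1, w e) * ∏ e ∈ M2, w e := by
  have hsub : ∀ W : Set V, swC (M1 ∆ M2) W ⊆ M1 ∆ M2 := fun W => swC_subset _ _
  rw [kuoSwap]
  split_ifs <;> simp only
  · exact swap_prod w (hsub _)
  · exact swap_prod w (hsub _)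
  · rw [mul_comm ((∏ e ∈ M2 ∆ swC (M1 ∆ M2) {v | (Hgr (M1 ∆ M2)).Reachable b v}, w e))]
    rw [swap_prod w (hsub _)]
  · rw [mul_comm ((∏ e ∈ M2 ∆ swC (M1 ∆ M2) {v | (Hgr (M1 ∆ M2)).Reachable c v}, w e))]
    rw [swap_prod w (hsub _)]
  · exact swap_prod w (hsub _)

/-! ### the master spec of the swap -/

lemma swap_PredOn_final {G : SimpleGraph V} {S : Finset V} {M1 M2 : Finset (Sym2 V)}
    {E1 E2 Q : Finset V} (hEQ : E1 ∪ E2 = Q) (hE12 : Disjoint E1 E2)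
    (h1 : PredOn G S (Finset.univ \ E1) M1) (h2 : PredOn G S (Finset.univ \ E2) M2)
    {W : Set V} (hW : WClosed (M1 ∆ M2) W) {F : Finset V}
    (hFQ : F ⊆ Q) (hF : ∀ v ∈ Q, (v ∈ W ↔ v ∈ F)) :
    PredOn G S (Finset.univ \ (E1 ∆ F)) (M1 ∆ swC (M1 ∆ M2) W) := by
  have hthis := swap_PredOn' hEQ h1 h2 hW
  have hE1Q : E1 ⊆ Q := hEQ ▸ Finset.subset_union_left
  have hE2Q : E2 ⊆ Q := hEQ ▸ Finset.subset_union_right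
  have hset : (E1 \ Q.filter (· ∈ W)) ∪ (E2 ∩ Q.filter (· ∈ W)) = E1 ∆ F := by
    ext v
    simp only [Finset.mem_union, Finset.mem_sdiff, Finset.mem_inter, Finset.mem_filter,
      Finset.mem_symmDiff]
    constructor
    · rintro (⟨h1', h2'⟩ | ⟨h1', h2', h3'⟩)
      · refine Or.inl ⟨h1', fun hvF => h2' ⟨hE1Q h1', (hF v (hE1Q h1')).mpr hvF⟩⟩
      · exact Or.inr ⟨(hF v h2').mp h3', Finset.disjoint_right.mp hE12 h1'⟩
    · rintro (⟨h1', h2'⟩ | ⟨h1', h2'⟩)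
      · exact Or.inl ⟨h1', fun hc => h2' ((hF v hc.1).mp hc.2)⟩
      · have hvQ : v ∈ Q := hFQ h1'
        have : v ∈ E1 ∪ E2 := hEQ ▸ hvQ
        rw [Finset.mem_union] at this
        rcases this with h | h
        · exact absurd h h2'
        · exact Or.inr ⟨h, hvQ, (hF v hvQ).mpr h1'⟩
  rwa [hset] at hthis

section Spec

variable {G : SimpleGraph V} {S : Finset V} {L : List V} {a b c d : V}
  {M1 M2 : Finset (Sym2 V)} {E1 E2 : Finset V}

lemma pair_sub {a b c d x y : V} (hx : x ∈ ({a, b, c, d} : Finset V))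
    (hy : y ∈ ({a, b, c, d} : Finset V)) : ({x, y} : Finset V) ⊆ {a, b, c, d} := by
  intro v hv
  rw [Finset.mem_insert, Finset.mem_singleton] at hv
  rcases hv with rfl | rfl
  · exact hx
  · exact hy

lemma kuoSwap_spec
    (hface : FaceConfig G L a b c d)
    (hdisjS : Disjoint S ({a, b, c, d} : Finset V))
    (hsepAC : Separated G S a b c d) (hsepBD : Separated G S b c d a)
    (hEQ : E1 ∪ E2 = {a, b, c, d}) (hE12 : Disjoint E1 E2)
    (h1 : PredOn G S (Finset.univ \ E1) M1) (h2 : PredOn G S (Finset.univ \ E2) M2) :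
    ((kuoSwap a b c d M1 M2).2 = true ∧
      ((PredOn G S (Finset.univ \ (E1 ∆ ({a, b} : Finset V))) (kuoSwap a b c d M1 M2).1.1 ∧
        PredOn G S (Finset.univ \ (E2 ∆ ({a, b} : Finset V))) (kuoSwap a b c d M1 M2).1.2) ∨
       (PredOn G S (Finset.univ \ (E2 ∆ ({c, d} : Finset V))) (kuoSwap a b c d M1 M2).1.1 ∧
        PredOn G S (Finset.univ \ (E1 ∆ ({c, d} : Finset V))) (kuoSwap a b c d M1 M2).1.2))) ∨
    ((kuoSwap a b c d M1 M2).2 = false ∧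
      ((PredOn G S (Finset.univ \ (E1 ∆ ({a, d} : Finset V))) (kuoSwap a b c d M1 M2).1.1 ∧
        PredOn G S (Finset.univ \ (E2 ∆ ({a, d} : Finset V))) (kuoSwap a b c d M1 M2).1.2) ∨
       (PredOn G S (Finset.univ \ (E2 ∆ ({b, c} : Finset V))) (kuoSwap a b c d M1 M2).1.1 ∧
        PredOn G S (Finset.univ \ (E1 ∆ ({b, c} : Finset V))) (kuoSwap a b c d M1 M2).1.2))) := by
  have hno_ac := no_ac hface hdisjS hsepAC hEQ hE12 h1 h2
  have hno_bd := no_bd hface hdisjS hsepBD hEQ hE12 h1 h2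
  have hEQ' : E2 ∪ E1 = ({a, b, c, d} : Finset V) := by rw [Finset.union_comm]; exact hEQ
  have hE12' : Disjoint E2 E1 := hE12.symm
  have hcomm : M2 ∆ M1 = M1 ∆ M2 := symmDiff_comm M2 M1
  have glue2 : ∀ (W : Set V), WClosed (M1 ∆ M2) W → ∀ (F : Finset V),
      F ⊆ ({a, b, c, d} : Finset V) → (∀ v ∈ ({a, b, c, d} : Finset V), (v ∈ W ↔ v ∈ F)) →
      PredOn G S (Finset.univ \ (E2 ∆ F)) (M2 ∆ swC (M1 ∆ M2) W) := by
    intro W hW F hFQ hF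
    have hW2 : WClosed (M2 ∆ M1) W := by rw [hcomm]; exact hW
    have := swap_PredOn_final hEQ' hE12' h2 h1 hW2 hFQ hF
    rwa [hcomm] at this
  have glue1 : ∀ (W : Set V), WClosed (M1 ∆ M2) W → ∀ (F : Finset V),
      F ⊆ ({a, b, c, d} : Finset V) → (∀ v ∈ ({a, b, c, d} : Finset V), (v ∈ W ↔ v ∈ F)) →
      PredOn G S (Finset.univ \ (E1 ∆ F)) (M1 ∆ swC (M1 ∆ M2) W) :=
    fun W hW F hFQ hF => swap_PredOn_final hEQ hE12 h1 h2 hW hFQ hF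
  have hmema : a ∈ ({a, b, c, d} : Finset V) := by simp
  have hmemb : b ∈ ({a, b, c, d} : Finset V) := by simp
  have hmemc : c ∈ ({a, b, c, d} : Finset V) := by simp
  have hmemd : d ∈ ({a, b, c, d} : Finset V) := by simp
  by_cases hc1 : (Hgr (M1 ∆ M2)).Reachable a b
  · have hr : kuoSwap a b c d M1 M2 =
        ((M1 ∆ swC (M1 ∆ M2) {v | (Hgr (M1 ∆ M2)).Reachable a v},
          M2 ∆ swC (M1 ∆ M2) {v | (Hgr (M1 ∆ M2)).Reachable a v}), true) := by
      rw [kuoSwap, if_pos hc1]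
    have hFw : ∀ v ∈ ({a, b, c, d} : Finset V),
        (v ∈ {v | (Hgr (M1 ∆ M2)).Reachable a v} ↔ v ∈ ({a, b} : Finset V)) := by
      intro v hv
      simp only [Finset.mem_insert, Finset.mem_singleton] at hv
      simp only [Set.mem_setOf_eq, Finset.mem_insert, Finset.mem_singleton]
      constructor
      · intro hreach
        rcases hv with rfl | rfl | rfl | rfl
        · exact Or.inl rfl
        · exact Or.inr rfl
        · exact absurd hreach hno_ac
        · exact absurd (hc1.symm.trans hreach) hno_bd
      · rintro (rfl | rfl)
        · exact SimpleGraph.Reachable.refl v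
        · exact hc1
    rw [hr]
    exact Or.inl ⟨rfl, Or.inl ⟨glue1 _ (WClosed_reach _ a) _ (pair_sub hmema hmemb) hFw,
      glue2 _ (WClosed_reach _ a) _ (pair_sub hmema hmemb) hFw⟩⟩
  · by_cases hc2 : (Hgr (M1 ∆ M2)).Reachable a d
    · have hr : kuoSwap a b c d M1 M2 =
          ((M1 ∆ swC (M1 ∆ M2) {v | (Hgr (M1 ∆ M2)).Reachable a v},
            M2 ∆ swC (M1 ∆ M2) {v | (Hgr (M1 ∆ M2)).Reachable a v}), false) := by
        rw [kuoSwap, if_neg hc1, if_pos hc2]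
      have hFw : ∀ v ∈ ({a, b, c, d} : Finset V),
          (v ∈ {v | (Hgr (M1 ∆ M2)).Reachable a v} ↔ v ∈ ({a, d} : Finset V)) := by
        intro v hv
        simp only [Finset.mem_insert, Finset.mem_singleton] at hv
        simp only [Set.mem_setOf_eq, Finset.mem_insert, Finset.mem_singleton]
        constructor
        · intro hreach
          rcases hv with rfl | rfl | rfl | rfl
          · exact Or.inl rfl
          · exact absurd hreach hc1
          · exact absurd hreach hno_ac
          · exact Or.inr rfl
        · rintro (rfl | rfl)
          · exact SimpleGraph.Reachable.refl v
          · exact hc2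
      rw [hr]
      exact Or.inr ⟨rfl, Or.inl ⟨glue1 _ (WClosed_reach _ a) _ (pair_sub hmema hmemd) hFw,
        glue2 _ (WClosed_reach _ a) _ (pair_sub hmema hmemd) hFw⟩⟩
    · by_cases hc3 : (Hgr (M1 ∆ M2)).Reachable b c
      · have hr : kuoSwap a b c d M1 M2 =
            ((M2 ∆ swC (M1 ∆ M2) {v | (Hgr (M1 ∆ M2)).Reachable b v},
              M1 ∆ swC (M1 ∆ M2) {v | (Hgr (M1 ∆ M2)).Reachable b v}), false) := by
          rw [kuoSwap, if_neg hc1, if_neg hc2, if_pos hc3]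
        have hFw : ∀ v ∈ ({a, b, c, d} : Finset V),
            (v ∈ {v | (Hgr (M1 ∆ M2)).Reachable b v} ↔ v ∈ ({b, c} : Finset V)) := by
          intro v hv
          simp only [Finset.mem_insert, Finset.mem_singleton] at hv
          simp only [Set.mem_setOf_eq, Finset.mem_insert, Finset.mem_singleton]
          constructor
          · intro hreach
            rcases hv with rfl | rfl | rfl | rfl
            · exact absurd hreach.symm hc1
            · exact Or.inl rfl
            · exact Or.inr rfl
            · exact absurd hreach hno_bd
          · rintro (rfl | rfl)
            · exact SimpleGraph.Reachable.refl v
            · exact hc3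
        rw [hr]
        exact Or.inr ⟨rfl, Or.inr ⟨glue2 _ (WClosed_reach _ b) _ (pair_sub hmemb hmemc) hFw,
          glue1 _ (WClosed_reach _ b) _ (pair_sub hmemb hmemc) hFw⟩⟩
      · by_cases hc4 : (Hgr (M1 ∆ M2)).Reachable c d
        · have hr : kuoSwap a b c d M1 M2 =
              ((M2 ∆ swC (M1 ∆ M2) {v | (Hgr (M1 ∆ M2)).Reachable c v},
                M1 ∆ swC (M1 ∆ M2) {v | (Hgr (M1 ∆ M2)).Reachable c v}), true) := by
            rw [kuoSwap, if_neg hc1, if_neg hc2, if_neg hc3, if_pos hc4]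
          have hFw : ∀ v ∈ ({a, b, c, d} : Finset V),
              (v ∈ {v | (Hgr (M1 ∆ M2)).Reachable c v} ↔ v ∈ ({c, d} : Finset V)) := by
            intro v hv
            simp only [Finset.mem_insert, Finset.mem_singleton] at hv
            simp only [Set.mem_setOf_eq, Finset.mem_insert, Finset.mem_singleton]
            constructor
            · intro hreach
              rcases hv with rfl | rfl | rfl | rfl
              · exact absurd hreach.symm hno_ac
              · exact absurd hreach.symm hc3
              · exact Or.inl rfl
              · exact Or.inr rfl
            · rintro (rfl | rfl)
              · exact SimpleGraph.Reachable.refl v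
              · exact hc4
          rw [hr]
          exact Or.inl ⟨rfl, Or.inr ⟨glue2 _ (WClosed_reach _ c) _ (pair_sub hmemc hmemd) hFw,
            glue1 _ (WClosed_reach _ c) _ (pair_sub hmemc hmemd) hFw⟩⟩
        · have hr : kuoSwap a b c d M1 M2 =
              ((M1 ∆ swC (M1 ∆ M2) ({v | (Hgr (M1 ∆ M2)).Reachable a v} ∪
                  {v | (Hgr (M1 ∆ M2)).Reachable b v}),
                M2 ∆ swC (M1 ∆ M2) ({v | (Hgr (M1 ∆ M2)).Reachable a v} ∪
                  {v | (Hgr (M1 ∆ M2)).Reachable b v})), true) := by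
            rw [kuoSwap, if_neg hc1, if_neg hc2, if_neg hc3, if_neg hc4]
          have hFw : ∀ v ∈ ({a, b, c, d} : Finset V),
              (v ∈ ({v | (Hgr (M1 ∆ M2)).Reachable a v} ∪
                {v | (Hgr (M1 ∆ M2)).Reachable b v}) ↔ v ∈ ({a, b} : Finset V)) := by
            intro v hv
            simp only [Finset.mem_insert, Finset.mem_singleton] at hv
            simp only [Set.mem_union, Set.mem_setOf_eq, Finset.mem_insert, Finset.mem_singleton]
            constructor
            · rintro (hreach | hreach)
              · rcases hv with rfl | rfl | rfl | rfl
                · exact Or.inl rfl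
                · exact absurd hreach hc1
                · exact absurd hreach hno_ac
                · exact absurd hreach hc2
              · rcases hv with rfl | rfl | rfl | rfl
                · exact absurd hreach.symm hc1
                · exact Or.inr rfl
                · exact absurd hreach hc3
                · exact absurd hreach hno_bd
            · rintro (rfl | rfl)
              · exact Or.inl (SimpleGraph.Reachable.refl v)
              · exact Or.inr (SimpleGraph.Reachable.refl v)
          rw [hr]
          exact Or.inl ⟨rfl, Or.inl
            ⟨glue1 _ (WClosed_union (WClosed_reach _ a) (WClosed_reach _ b)) _
              (pair_sub hmema hmemb) hFw,
             glue2 _ (WClosed_union (WClosed_reach _ a) (WClosed_reach _ b)) _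
              (pair_sub hmema hmemb) hFw⟩⟩

end Spec


/-! ### the involution on the disjoint sum -/

noncomputable def kuoPhi (a b c d : V) :
    (Finset (Sym2 V) × Finset (Sym2 V)) ⊕ (Finset (Sym2 V) × Finset (Sym2 V)) →
      (Finset (Sym2 V) × Finset (Sym2 V)) ⊕ (Finset (Sym2 V) × Finset (Sym2 V))
  | Sum.inl p => if (kuoSwap a b c d p.1 p.2).2 = true then Sum.inr (kuoSwap a b c d p.1 p.2).1
      else Sum.inl (kuoSwap a b c d p.1 p.2).1
  | Sum.inr p => if (kuoSwap a b c d p.1 p.2).2 = true then Sum.inl (kuoSwap a b c d p.1 p.2).1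
      else Sum.inr (kuoSwap a b c d p.1 p.2).1

lemma kuoPhi_invol (a b c d : V)
    (x : (Finset (Sym2 V) × Finset (Sym2 V)) ⊕ (Finset (Sym2 V) × Finset (Sym2 V))) :
    kuoPhi a b c d (kuoPhi a b c d x) = x := by
  rcases x with p | p
  · have hk := kuoSwap_invol a b c d p.1 p.2
    by_cases hb : (kuoSwap a b c d p.1 p.2).2 = true
    · have h1 : kuoPhi a b c d (Sum.inl p) = Sum.inr (kuoSwap a b c d p.1 p.2).1 := by
        simp only [kuoPhi]; rw [if_pos hb]
      rw [h1]
      simp only [kuoPhi]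
      rw [hk]
      simp only [hb, if_true, Prod.mk.eta]
    · have h1 : kuoPhi a b c d (Sum.inl p) = Sum.inl (kuoSwap a b c d p.1 p.2).1 := by
        simp only [kuoPhi]; rw [if_neg hb]
      rw [h1]
      simp only [kuoPhi]
      rw [hk]
      simp only [if_neg hb, Prod.mk.eta]
  · have hk := kuoSwap_invol a b c d p.1 p.2
    by_cases hb : (kuoSwap a b c d p.1 p.2).2 = true
    · have h1 : kuoPhi a b c d (Sum.inr p) = Sum.inl (kuoSwap a b c d p.1 p.2).1 := by
        simp only [kuoPhi]; rw [if_pos hb]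
      rw [h1]
      simp only [kuoPhi]
      rw [hk]
      simp only [hb, if_true, Prod.mk.eta]
    · have h1 : kuoPhi a b c d (Sum.inr p) = Sum.inr (kuoSwap a b c d p.1 p.2).1 := by
        simp only [kuoPhi]; rw [if_neg hb]
      rw [h1]
      simp only [kuoPhi]
      rw [hk]
      simp only [if_neg hb, Prod.mk.eta]

lemma kuoPhi_weight {R : Type*} [CommRing R] (w : Sym2 V → R) (a b c d : V)
    (x : (Finset (Sym2 V) × Finset (Sym2 V)) ⊕ (Finset (Sym2 V) × Finset (Sym2 V))) :
    Sum.elim (fun p : Finset (Sym2 V) × Finset (Sym2 V) => (∏ e ∈ p.1, w e) * ∏ e ∈ p.2, w e)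
        (fun p : Finset (Sym2 V) × Finset (Sym2 V) => (∏ e ∈ p.1, w e) * ∏ e ∈ p.2, w e)
        (kuoPhi a b c d x) =
      Sum.elim (fun p : Finset (Sym2 V) × Finset (Sym2 V) => (∏ e ∈ p.1, w e) * ∏ e ∈ p.2, w e)
        (fun p : Finset (Sym2 V) × Finset (Sym2 V) => (∏ e ∈ p.1, w e) * ∏ e ∈ p.2, w e) x := by
  rcases x with p | p <;> by_cases hb : (kuoSwap a b c d p.1 p.2).2 = true
  · simp only [kuoPhi, if_pos hb, Sum.elim_inl, Sum.elim_inr]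
    exact kuoSwap_weight w a b c d p.1 p.2
  · simp only [kuoPhi, if_neg hb, Sum.elim_inl, Sum.elim_inr]
    exact kuoSwap_weight w a b c d p.1 p.2
  · simp only [kuoPhi, if_pos hb, Sum.elim_inl, Sum.elim_inr]
    exact kuoSwap_weight w a b c d p.1 p.2
  · simp only [kuoPhi, if_neg hb, Sum.elim_inl, Sum.elim_inr]
    exact kuoSwap_weight w a b c d p.1 p.2

/-! ### small symmetric-difference identities -/

lemma sd_empty (X : Finset V) : (∅ : Finset V) ∆ X = X := by
  rw [← Finset.bot_eq_empty, bot_symmDiff]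

lemma sd_self (X : Finset V) : X ∆ X = (∅ : Finset V) := by
  rw [symmDiff_self, Finset.bot_eq_empty]

lemma sd_Q_ab {a b c d : V} (hab : a ≠ b) (hac : a ≠ c) (had : a ≠ d)
    (hbc : b ≠ c) (hbd : b ≠ d) (hcd : c ≠ d) :
    ({a, b, c, d} : Finset V) ∆ ({a, b} : Finset V) = ({c, d} : Finset V) := by
  ext v
  by_cases h1 : v = a <;> by_cases h2 : v = b <;> by_cases h3 : v = c <;> by_cases h4 : v = d <;>
    simp_all [Finset.mem_symmDiff]

lemma sd_Q_cd {a b c d : V} (hab : a ≠ b) (hac : a ≠ c) (had : a ≠ d)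
    (hbc : b ≠ c) (hbd : b ≠ d) (hcd : c ≠ d) :
    ({a, b, c, d} : Finset V) ∆ ({c, d} : Finset V) = ({a, b} : Finset V) := by
  ext v
  by_cases h1 : v = a <;> by_cases h2 : v = b <;> by_cases h3 : v = c <;> by_cases h4 : v = d <;>
    simp_all [Finset.mem_symmDiff]

lemma sd_Q_ad {a b c d : V} (hab : a ≠ b) (hac : a ≠ c) (had : a ≠ d)
    (hbc : b ≠ c) (hbd : b ≠ d) (hcd : c ≠ d) :
    ({a, b, c, d} : Finset V) ∆ ({a, d} : Finset V) = ({b, c} : Finset V) := by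
  ext v
  by_cases h1 : v = a <;> by_cases h2 : v = b <;> by_cases h3 : v = c <;> by_cases h4 : v = d <;>
    simp_all [Finset.mem_symmDiff]

lemma sd_Q_bc {a b c d : V} (hab : a ≠ b) (hac : a ≠ c) (had : a ≠ d)
    (hbc : b ≠ c) (hbd : b ≠ d) (hcd : c ≠ d) :
    ({a, b, c, d} : Finset V) ∆ ({b, c} : Finset V) = ({a, d} : Finset V) := by
  ext v
  by_cases h1 : v = a <;> by_cases h2 : v = b <;> by_cases h3 : v = c <;> by_cases h4 : v = d <;>
    simp_all [Finset.mem_symmDiff]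

lemma sd_bd_ab {a b c d : V} (hab : a ≠ b) (hac : a ≠ c) (had : a ≠ d)
    (hbc : b ≠ c) (hbd : b ≠ d) (hcd : c ≠ d) :
    ({b, d} : Finset V) ∆ ({a, b} : Finset V) = ({a, d} : Finset V) := by
  ext v
  by_cases h1 : v = a <;> by_cases h2 : v = b <;> by_cases h3 : v = c <;> by_cases h4 : v = d <;>
    simp_all [Finset.mem_symmDiff]

lemma sd_ac_ab {a b c d : V} (hab : a ≠ b) (hac : a ≠ c) (had : a ≠ d)
    (hbc : b ≠ c) (hbd : b ≠ d) (hcd : c ≠ d) :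
    ({a, c} : Finset V) ∆ ({a, b} : Finset V) = ({b, c} : Finset V) := by
  ext v
  by_cases h1 : v = a <;> by_cases h2 : v = b <;> by_cases h3 : v = c <;> by_cases h4 : v = d <;>
    simp_all [Finset.mem_symmDiff]

lemma sd_ac_cd {a b c d : V} (hab : a ≠ b) (hac : a ≠ c) (had : a ≠ d)
    (hbc : b ≠ c) (hbd : b ≠ d) (hcd : c ≠ d) :
    ({a, c} : Finset V) ∆ ({c, d} : Finset V) = ({a, d} : Finset V) := by
  ext v
  by_cases h1 : v = a <;> by_cases h2 : v = b <;> by_cases h3 : v = c <;> by_cases h4 : v = d <;>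
    simp_all [Finset.mem_symmDiff]

lemma sd_bd_cd {a b c d : V} (hab : a ≠ b) (hac : a ≠ c) (had : a ≠ d)
    (hbc : b ≠ c) (hbd : b ≠ d) (hcd : c ≠ d) :
    ({b, d} : Finset V) ∆ ({c, d} : Finset V) = ({b, c} : Finset V) := by
  ext v
  by_cases h1 : v = a <;> by_cases h2 : v = b <;> by_cases h3 : v = c <;> by_cases h4 : v = d <;>
    simp_all [Finset.mem_symmDiff]

lemma sd_bd_ad {a b c d : V} (hab : a ≠ b) (hac : a ≠ c) (had : a ≠ d)
    (hbc : b ≠ c) (hbd : b ≠ d) (hcd : c ≠ d) :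
    ({b, d} : Finset V) ∆ ({a, d} : Finset V) = ({a, b} : Finset V) := by
  ext v
  by_cases h1 : v = a <;> by_cases h2 : v = b <;> by_cases h3 : v = c <;> by_cases h4 : v = d <;>
    simp_all [Finset.mem_symmDiff]

lemma sd_ac_ad {a b c d : V} (hab : a ≠ b) (hac : a ≠ c) (had : a ≠ d)
    (hbc : b ≠ c) (hbd : b ≠ d) (hcd : c ≠ d) :
    ({a, c} : Finset V) ∆ ({a, d} : Finset V) = ({c, d} : Finset V) := by
  ext v
  by_cases h1 : v = a <;> by_cases h2 : v = b <;> by_cases h3 : v = c <;> by_cases h4 : v = d <;>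
    simp_all [Finset.mem_symmDiff]

lemma sd_ac_bc {a b c d : V} (hab : a ≠ b) (hac : a ≠ c) (had : a ≠ d)
    (hbc : b ≠ c) (hbd : b ≠ d) (hcd : c ≠ d) :
    ({a, c} : Finset V) ∆ ({b, c} : Finset V) = ({a, b} : Finset V) := by
  ext v
  by_cases h1 : v = a <;> by_cases h2 : v = b <;> by_cases h3 : v = c <;> by_cases h4 : v = d <;>
    simp_all [Finset.mem_symmDiff]

lemma sd_bd_bc {a b c d : V} (hab : a ≠ b) (hac : a ≠ c) (had : a ≠ d)
    (hbc : b ≠ c) (hbd : b ≠ d) (hcd : c ≠ d) :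
    ({b, d} : Finset V) ∆ ({b, c} : Finset V) = ({c, d} : Finset V) := by
  ext v
  by_cases h1 : v = a <;> by_cases h2 : v = b <;> by_cases h3 : v = c <;> by_cases h4 : v = d <;>
    simp_all [Finset.mem_symmDiff]

lemma sd_ad_ab {a b c d : V} (hab : a ≠ b) (hac : a ≠ c) (had : a ≠ d)
    (hbc : b ≠ c) (hbd : b ≠ d) (hcd : c ≠ d) :
    ({a, d} : Finset V) ∆ ({a, b} : Finset V) = ({b, d} : Finset V) := by
  ext v
  by_cases h1 : v = a <;> by_cases h2 : v = b <;> by_cases h3 : v = c <;> by_cases h4 : v = d <;>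
    simp_all [Finset.mem_symmDiff]

lemma sd_bc_ab {a b c d : V} (hab : a ≠ b) (hac : a ≠ c) (had : a ≠ d)
    (hbc : b ≠ c) (hbd : b ≠ d) (hcd : c ≠ d) :
    ({b, c} : Finset V) ∆ ({a, b} : Finset V) = ({a, c} : Finset V) := by
  ext v
  by_cases h1 : v = a <;> by_cases h2 : v = b <;> by_cases h3 : v = c <;> by_cases h4 : v = d <;>
    simp_all [Finset.mem_symmDiff]

lemma sd_bc_cd {a b c d : V} (hab : a ≠ b) (hac : a ≠ c) (had : a ≠ d)
    (hbc : b ≠ c) (hbd : b ≠ d) (hcd : c ≠ d) :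
    ({b, c} : Finset V) ∆ ({c, d} : Finset V) = ({b, d} : Finset V) := by
  ext v
  by_cases h1 : v = a <;> by_cases h2 : v = b <;> by_cases h3 : v = c <;> by_cases h4 : v = d <;>
    simp_all [Finset.mem_symmDiff]

lemma sd_ad_cd {a b c d : V} (hab : a ≠ b) (hac : a ≠ c) (had : a ≠ d)
    (hbc : b ≠ c) (hbd : b ≠ d) (hcd : c ≠ d) :
    ({a, d} : Finset V) ∆ ({c, d} : Finset V) = ({a, c} : Finset V) := by
  ext v
  by_cases h1 : v = a <;> by_cases h2 : v = b <;> by_cases h3 : v = c <;> by_cases h4 : v = d <;>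
    simp_all [Finset.mem_symmDiff]

lemma sd_bc_ad {a b c d : V} (hab : a ≠ b) (hac : a ≠ c) (had : a ≠ d)
    (hbc : b ≠ c) (hbd : b ≠ d) (hcd : c ≠ d) :
    ({b, c} : Finset V) ∆ ({a, d} : Finset V) = ({a, b, c, d} : Finset V) := by
  ext v
  by_cases h1 : v = a <;> by_cases h2 : v = b <;> by_cases h3 : v = c <;> by_cases h4 : v = d <;>
    simp_all [Finset.mem_symmDiff]

lemma sd_ad_bc {a b c d : V} (hab : a ≠ b) (hac : a ≠ c) (had : a ≠ d)
    (hbc : b ≠ c) (hbd : b ≠ d) (hcd : c ≠ d) :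
    ({a, d} : Finset V) ∆ ({b, c} : Finset V) = ({a, b, c, d} : Finset V) := by
  ext v
  by_cases h1 : v = a <;> by_cases h2 : v = b <;> by_cases h3 : v = c <;> by_cases h4 : v = d <;>
    simp_all [Finset.mem_symmDiff]

lemma sd_cd_ab {a b c d : V} (hab : a ≠ b) (hac : a ≠ c) (had : a ≠ d)
    (hbc : b ≠ c) (hbd : b ≠ d) (hcd : c ≠ d) :
    ({c, d} : Finset V) ∆ ({a, b} : Finset V) = ({a, b, c, d} : Finset V) := by
  ext v
  by_cases h1 : v = a <;> by_cases h2 : v = b <;> by_cases h3 : v = c <;> by_cases h4 : v = d <;>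
    simp_all [Finset.mem_symmDiff]

lemma sd_ab_cd {a b c d : V} (hab : a ≠ b) (hac : a ≠ c) (had : a ≠ d)
    (hbc : b ≠ c) (hbd : b ≠ d) (hcd : c ≠ d) :
    ({a, b} : Finset V) ∆ ({c, d} : Finset V) = ({a, b, c, d} : Finset V) := by
  ext v
  by_cases h1 : v = a <;> by_cases h2 : v = b <;> by_cases h3 : v = c <;> by_cases h4 : v = d <;>
    simp_all [Finset.mem_symmDiff]

lemma sd_ab_ad {a b c d : V} (hab : a ≠ b) (hac : a ≠ c) (had : a ≠ d)
    (hbc : b ≠ c) (hbd : b ≠ d) (hcd : c ≠ d) :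
    ({a, b} : Finset V) ∆ ({a, d} : Finset V) = ({b, d} : Finset V) := by
  ext v
  by_cases h1 : v = a <;> by_cases h2 : v = b <;> by_cases h3 : v = c <;> by_cases h4 : v = d <;>
    simp_all [Finset.mem_symmDiff]

lemma sd_cd_ad {a b c d : V} (hab : a ≠ b) (hac : a ≠ c) (had : a ≠ d)
    (hbc : b ≠ c) (hbd : b ≠ d) (hcd : c ≠ d) :
    ({c, d} : Finset V) ∆ ({a, d} : Finset V) = ({a, c} : Finset V) := by
  ext v
  by_cases h1 : v = a <;> by_cases h2 : v = b <;> by_cases h3 : v = c <;> by_cases h4 : v = d <;>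
    simp_all [Finset.mem_symmDiff]

lemma sd_cd_bc {a b c d : V} (hab : a ≠ b) (hac : a ≠ c) (had : a ≠ d)
    (hbc : b ≠ c) (hbd : b ≠ d) (hcd : c ≠ d) :
    ({c, d} : Finset V) ∆ ({b, c} : Finset V) = ({b, d} : Finset V) := by
  ext v
  by_cases h1 : v = a <;> by_cases h2 : v = b <;> by_cases h3 : v = c <;> by_cases h4 : v = d <;>
    simp_all [Finset.mem_symmDiff]

lemma sd_ab_bc {a b c d : V} (hab : a ≠ b) (hac : a ≠ c) (had : a ≠ d)
    (hbc : b ≠ c) (hbd : b ≠ d) (hcd : c ≠ d) :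
    ({a, b} : Finset V) ∆ ({b, c} : Finset V) = ({a, c} : Finset V) := by
  ext v
  by_cases h1 : v = a <;> by_cases h2 : v = b <;> by_cases h3 : v = c <;> by_cases h4 : v = d <;>
    simp_all [Finset.mem_symmDiff]

lemma kuoPhi_mapsLR {G : SimpleGraph V} {S : Finset V} {L : List V} {a b c d : V}
    (hface : FaceConfig G L a b c d) (hdisjS : Disjoint S ({a, b, c, d} : Finset V))
    (hsepAC : Separated G S a b c d) (hsepBD : Separated G S b c d a) :
    ∀ x ∈ ((Finset.univ.filter (PredOn G S Finset.univ) ×ˢ Finset.univ.filter (PredOn G S (Finset.univ \ ({a, b, c, d} : Finset V)))).disjSum (Finset.univ.filter (PredOn G S (Finset.univ \ ({b, d} : Finset V))) ×ˢ Finset.univ.filter (PredOn G S (Finset.univ \ ({a, c} : Finset V))))),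
      kuoPhi a b c d x ∈ ((Finset.univ.filter (PredOn G S (Finset.univ \ ({a, d} : Finset V))) ×ˢ Finset.univ.filter (PredOn G S (Finset.univ \ ({b, c} : Finset V)))).disjSum (Finset.univ.filter (PredOn G S (Finset.univ \ ({a, b} : Finset V))) ×ˢ Finset.univ.filter (PredOn G S (Finset.univ \ ({c, d} : Finset V))))) := by
  obtain ⟨⟨hab, hac, had, hbc, hbd, hcd⟩, -⟩ := face_facts hface
  intro x hx
  rcases x with p | p
  · rw [Finset.inl_mem_disjSum, Finset.mem_product, Finset.mem_filter,
      Finset.mem_filter] at hx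
    have hp1 : PredOn G S (Finset.univ \ (∅ : Finset V)) p.1 := by
      rw [Finset.sdiff_empty]
      exact hx.1.2
    have hp2 : PredOn G S (Finset.univ \ ({a, b, c, d} : Finset V)) p.2 := hx.2.2
    have hEQ : ((∅ : Finset V) : Finset V) ∪ ({a, b, c, d} : Finset V) = ({a, b, c, d} : Finset V) := Finset.empty_union _
    have hE12 : Disjoint ((∅ : Finset V) : Finset V) (({a, b, c, d} : Finset V) : Finset V) := Finset.disjoint_empty_left _
    have spec := kuoSwap_spec hface hdisjS hsepAC hsepBD hEQ hE12 hp1 hp2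
    rcases spec with ⟨hflip, hcase⟩ | ⟨hflip, hcase⟩
    · have hPhi : kuoPhi a b c d (Sum.inl p) = Sum.inr (kuoSwap a b c d p.1 p.2).1 := by
        simp only [kuoPhi]; rw [if_pos hflip]
      rw [hPhi, Finset.inr_mem_disjSum, Finset.mem_product, Finset.mem_filter,
        Finset.mem_filter]
      rcases hcase with ⟨h1', h2'⟩ | ⟨h1', h2'⟩
      · rw [sd_empty] at h1'
        rw [sd_Q_ab hab hac had hbc hbd hcd] at h2'
        exact ⟨⟨Finset.mem_univ _, h1'⟩, Finset.mem_univ _, h2'⟩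
      · rw [sd_Q_cd hab hac had hbc hbd hcd] at h1'
        rw [sd_empty] at h2'
        exact ⟨⟨Finset.mem_univ _, h1'⟩, Finset.mem_univ _, h2'⟩
    · have hPhi : kuoPhi a b c d (Sum.inl p) = Sum.inl (kuoSwap a b c d p.1 p.2).1 := by
        simp only [kuoPhi]; rw [if_neg (by simp [hflip])]
      rw [hPhi, Finset.inl_mem_disjSum, Finset.mem_product, Finset.mem_filter,
        Finset.mem_filter]
      rcases hcase with ⟨h1', h2'⟩ | ⟨h1', h2'⟩
      · rw [sd_empty] at h1'
        rw [sd_Q_ad hab hac had hbc hbd hcd] at h2'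
        exact ⟨⟨Finset.mem_univ _, h1'⟩, Finset.mem_univ _, h2'⟩
      · rw [sd_Q_bc hab hac had hbc hbd hcd] at h1'
        rw [sd_empty] at h2'
        exact ⟨⟨Finset.mem_univ _, h1'⟩, Finset.mem_univ _, h2'⟩
  · rw [Finset.inr_mem_disjSum, Finset.mem_product, Finset.mem_filter,
      Finset.mem_filter] at hx
    have hp1 : PredOn G S (Finset.univ \ ({b, d} : Finset V)) p.1 := hx.1.2
    have hp2 : PredOn G S (Finset.univ \ ({a, c} : Finset V)) p.2 := hx.2.2
    have hEQ : (({b, d} : Finset V) : Finset V) ∪ ({a, c} : Finset V) = ({a, b, c, d} : Finset V) := by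
      ext v
      simp only [Finset.mem_union, Finset.mem_insert, Finset.mem_singleton]
      tauto
    have hE12 : Disjoint (({b, d} : Finset V) : Finset V) (({a, c} : Finset V) : Finset V) := by
      rw [Finset.disjoint_left]
      intro v hv hv'
      simp only [Finset.mem_insert, Finset.mem_singleton] at hv hv'
      rcases hv with rfl | rfl <;> rcases hv' with rfl | rfl <;> simp_all
    have spec := kuoSwap_spec hface hdisjS hsepAC hsepBD hEQ hE12 hp1 hp2
    rcases spec with ⟨hflip, hcase⟩ | ⟨hflip, hcase⟩
    · have hPhi : kuoPhi a b c d (Sum.inr p) = Sum.inl (kuoSwap a b c d p.1 p.2).1 := by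
        simp only [kuoPhi]; rw [if_pos hflip]
      rw [hPhi, Finset.inl_mem_disjSum, Finset.mem_product, Finset.mem_filter,
        Finset.mem_filter]
      rcases hcase with ⟨h1', h2'⟩ | ⟨h1', h2'⟩
      · rw [sd_bd_ab hab hac had hbc hbd hcd] at h1'
        rw [sd_ac_ab hab hac had hbc hbd hcd] at h2'
        exact ⟨⟨Finset.mem_univ _, h1'⟩, Finset.mem_univ _, h2'⟩
      · rw [sd_ac_cd hab hac had hbc hbd hcd] at h1'
        rw [sd_bd_cd hab hac had hbc hbd hcd] at h2'
        exact ⟨⟨Finset.mem_univ _, h1'⟩, Finset.mem_univ _, h2'⟩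
    · have hPhi : kuoPhi a b c d (Sum.inr p) = Sum.inr (kuoSwap a b c d p.1 p.2).1 := by
        simp only [kuoPhi]; rw [if_neg (by simp [hflip])]
      rw [hPhi, Finset.inr_mem_disjSum, Finset.mem_product, Finset.mem_filter,
        Finset.mem_filter]
      rcases hcase with ⟨h1', h2'⟩ | ⟨h1', h2'⟩
      · rw [sd_bd_ad hab hac had hbc hbd hcd] at h1'
        rw [sd_ac_ad hab hac had hbc hbd hcd] at h2'
        exact ⟨⟨Finset.mem_univ _, h1'⟩, Finset.mem_univ _, h2'⟩
      · rw [sd_ac_bc hab hac had hbc hbd hcd] at h1'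
        rw [sd_bd_bc hab hac had hbc hbd hcd] at h2'
        exact ⟨⟨Finset.mem_univ _, h1'⟩, Finset.mem_univ _, h2'⟩

lemma kuoPhi_mapsRL {G : SimpleGraph V} {S : Finset V} {L : List V} {a b c d : V}
    (hface : FaceConfig G L a b c d) (hdisjS : Disjoint S ({a, b, c, d} : Finset V))
    (hsepAC : Separated G S a b c d) (hsepBD : Separated G S b c d a) :
    ∀ x ∈ ((Finset.univ.filter (PredOn G S (Finset.univ \ ({a, d} : Finset V))) ×ˢ Finset.univ.filter (PredOn G S (Finset.univ \ ({b, c} : Finset V)))).disjSum (Finset.univ.filter (PredOn G S (Finset.univ \ ({a, b} : Finset V))) ×ˢ Finset.univ.filter (PredOn G S (Finset.univ \ ({c, d} : Finset V))))),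
      kuoPhi a b c d x ∈ ((Finset.univ.filter (PredOn G S Finset.univ) ×ˢ Finset.univ.filter (PredOn G S (Finset.univ \ ({a, b, c, d} : Finset V)))).disjSum (Finset.univ.filter (PredOn G S (Finset.univ \ ({b, d} : Finset V))) ×ˢ Finset.univ.filter (PredOn G S (Finset.univ \ ({a, c} : Finset V))))) := by
  obtain ⟨⟨hab, hac, had, hbc, hbd, hcd⟩, -⟩ := face_facts hface
  intro x hx
  rcases x with p | p
  · rw [Finset.inl_mem_disjSum, Finset.mem_product, Finset.mem_filter,
      Finset.mem_filter] at hx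
    have hp1 : PredOn G S (Finset.univ \ ({a, d} : Finset V)) p.1 := hx.1.2
    have hp2 : PredOn G S (Finset.univ \ ({b, c} : Finset V)) p.2 := hx.2.2
    have hEQ : (({a, d} : Finset V) : Finset V) ∪ ({b, c} : Finset V) = ({a, b, c, d} : Finset V) := by
      ext v
      simp only [Finset.mem_union, Finset.mem_insert, Finset.mem_singleton]
      tauto
    have hE12 : Disjoint (({a, d} : Finset V) : Finset V) (({b, c} : Finset V) : Finset V) := by
      rw [Finset.disjoint_left]
      intro v hv hv'
      simp only [Finset.mem_insert, Finset.mem_singleton] at hv hv'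
      rcases hv with rfl | rfl <;> rcases hv' with rfl | rfl <;> simp_all
    have spec := kuoSwap_spec hface hdisjS hsepAC hsepBD hEQ hE12 hp1 hp2
    rcases spec with ⟨hflip, hcase⟩ | ⟨hflip, hcase⟩
    · have hPhi : kuoPhi a b c d (Sum.inl p) = Sum.inr (kuoSwap a b c d p.1 p.2).1 := by
        simp only [kuoPhi]; rw [if_pos hflip]
      rw [hPhi, Finset.inr_mem_disjSum, Finset.mem_product, Finset.mem_filter,
        Finset.mem_filter]
      rcases hcase with ⟨h1', h2'⟩ | ⟨h1', h2'⟩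
      · rw [sd_ad_ab hab hac had hbc hbd hcd] at h1'
        rw [sd_bc_ab hab hac had hbc hbd hcd] at h2'
        exact ⟨⟨Finset.mem_univ _, h1'⟩, Finset.mem_univ _, h2'⟩
      · rw [sd_bc_cd hab hac had hbc hbd hcd] at h1'
        rw [sd_ad_cd hab hac had hbc hbd hcd] at h2'
        exact ⟨⟨Finset.mem_univ _, h1'⟩, Finset.mem_univ _, h2'⟩
    · have hPhi : kuoPhi a b c d (Sum.inl p) = Sum.inl (kuoSwap a b c d p.1 p.2).1 := by
        simp only [kuoPhi]; rw [if_neg (by simp [hflip])]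
      rw [hPhi, Finset.inl_mem_disjSum, Finset.mem_product, Finset.mem_filter,
        Finset.mem_filter]
      rcases hcase with ⟨h1', h2'⟩ | ⟨h1', h2'⟩
      · rw [sd_self, Finset.sdiff_empty] at h1'
        rw [sd_bc_ad hab hac had hbc hbd hcd] at h2'
        exact ⟨⟨Finset.mem_univ _, h1'⟩, Finset.mem_univ _, h2'⟩
      · rw [sd_self, Finset.sdiff_empty] at h1'
        rw [sd_ad_bc hab hac had hbc hbd hcd] at h2'
        exact ⟨⟨Finset.mem_univ _, h1'⟩, Finset.mem_univ _, h2'⟩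
  · rw [Finset.inr_mem_disjSum, Finset.mem_product, Finset.mem_filter,
      Finset.mem_filter] at hx
    have hp1 : PredOn G S (Finset.univ \ ({a, b} : Finset V)) p.1 := hx.1.2
    have hp2 : PredOn G S (Finset.univ \ ({c, d} : Finset V)) p.2 := hx.2.2
    have hEQ : (({a, b} : Finset V) : Finset V) ∪ ({c, d} : Finset V) = ({a, b, c, d} : Finset V) := by
      ext v
      simp only [Finset.mem_union, Finset.mem_insert, Finset.mem_singleton]
      tauto
    have hE12 : Disjoint (({a, b} : Finset V) : Finset V) (({c, d} : Finset V) : Finset V) := by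
      rw [Finset.disjoint_left]
      intro v hv hv'
      simp only [Finset.mem_insert, Finset.mem_singleton] at hv hv'
      rcases hv with rfl | rfl <;> rcases hv' with rfl | rfl <;> simp_all
    have spec := kuoSwap_spec hface hdisjS hsepAC hsepBD hEQ hE12 hp1 hp2
    rcases spec with ⟨hflip, hcase⟩ | ⟨hflip, hcase⟩
    · have hPhi : kuoPhi a b c d (Sum.inr p) = Sum.inl (kuoSwap a b c d p.1 p.2).1 := by
        simp only [kuoPhi]; rw [if_pos hflip]
      rw [hPhi, Finset.inl_mem_disjSum, Finset.mem_product, Finset.mem_filter,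
        Finset.mem_filter]
      rcases hcase with ⟨h1', h2'⟩ | ⟨h1', h2'⟩
      · rw [sd_self, Finset.sdiff_empty] at h1'
        rw [sd_cd_ab hab hac had hbc hbd hcd] at h2'
        exact ⟨⟨Finset.mem_univ _, h1'⟩, Finset.mem_univ _, h2'⟩
      · rw [sd_self, Finset.sdiff_empty] at h1'
        rw [sd_ab_cd hab hac had hbc hbd hcd] at h2'
        exact ⟨⟨Finset.mem_univ _, h1'⟩, Finset.mem_univ _, h2'⟩
    · have hPhi : kuoPhi a b c d (Sum.inr p) = Sum.inr (kuoSwap a b c d p.1 p.2).1 := by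
        simp only [kuoPhi]; rw [if_neg (by simp [hflip])]
      rw [hPhi, Finset.inr_mem_disjSum, Finset.mem_product, Finset.mem_filter,
        Finset.mem_filter]
      rcases hcase with ⟨h1', h2'⟩ | ⟨h1', h2'⟩
      · rw [sd_ab_ad hab hac had hbc hbd hcd] at h1'
        rw [sd_cd_ad hab hac had hbc hbd hcd] at h2'
        exact ⟨⟨Finset.mem_univ _, h1'⟩, Finset.mem_univ _, h2'⟩
      · rw [sd_cd_bc hab hac had hbc hbd hcd] at h1'
        rw [sd_ab_bc hab hac had hbc hbd hcd] at h2'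
        exact ⟨⟨Finset.mem_univ _, h1'⟩, Finset.mem_univ _, h2'⟩

end KuoAux

set_option maxHeartbeats 4000000 in
/-- **Free-boundary Kuo condensation, first four-term version** (Corollary 2, eq. (3)).
If the free set `S` on the face is both `a,c`-separated and `b,d`-separated, then
Kuo's Pfaffian-type four-term recurrence holds for free-boundary matching counts. -/
theorem free_boundary_kuo_four_term
    (G : SimpleGraph V) (w : Sym2 V → R) (L : List V) (S : Finset V) (a b c d : V)
    (hface : FaceConfig G L a b c d)
    (hSL : ∀ s ∈ S, s ∈ L)
    (hdisj : Disjoint S ({a, b, c, d} : Finset V))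
    (hsepAC : Separated G S a b c d)
    (hsepBD : Separated G S b c d a) :
    Mf G w S Finset.univ * Mf G w S (Finset.univ \ {a, b, c, d}) +
      Mf G w S (Finset.univ \ {b, d}) * Mf G w S (Finset.univ \ {a, c}) =
    Mf G w S (Finset.univ \ {a, d}) * Mf G w S (Finset.univ \ {b, c}) +
      Mf G w S (Finset.univ \ {a, b}) * Mf G w S (Finset.univ \ {c, d}) := by
  classical
  have expand : ∀ A B : Finset V,
      Mf G w S A * Mf G w S B =
        ∑ p ∈ Finset.univ.filter (PredOn G S A) ×ˢ Finset.univ.filter (PredOn G S B),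
          (∏ e ∈ p.1, w e) * ∏ e ∈ p.2, w e := by
    intro A B
    have hcol : ∀ C : Finset V,
        (Finset.univ.filter (fun M : Finset (Sym2 V) =>
          IsMatchingOn G C M ∧ ∀ v ∈ C, v ∉ S → ∃ e ∈ M, v ∈ e)) =
          Finset.univ.filter (PredOn G S C) :=
      fun C => Finset.filter_congr (fun M _ => Iff.rfl)
    simp only [Mf]
    rw [hcol A, hcol B, Finset.sum_mul_sum]
    exact (Finset.sum_product _ _ (fun p => (∏ e ∈ p.1, w e) * ∏ e ∈ p.2, w e)).symm
  rw [expand, expand, expand, expand]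
  rw [← Finset.sum_sumElim, ← Finset.sum_sumElim]
  exact Finset.sum_nbij' (kuoPhi a b c d) (kuoPhi a b c d)
    (kuoPhi_mapsLR hface hdisj hsepAC hsepBD)
    (kuoPhi_mapsRL hface hdisj hsepAC hsepBD)
    (fun x _ => kuoPhi_invol a b c d x) (fun x _ => kuoPhi_invol a b c d x)
    (fun x _ => (kuoPhi_weight w a b c d x).symm)
end
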